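/- arXiv:2011.00991 — 6 statements merged into one kernel-verified Lean document; each statement's English description precedes it below -/
import Mathlib

section
/- Let Q₁ and Q₂ be N×N complex matrices and p a complex scalar. Then the characteristic polynomial of the supra-Laplacian Q satisfies, for every λ, det(λ·I₂ₙ − Q) = det( (λ·I − (Q₁+Q₂)/2)·((λ−2p)·I − (Q₁+Q₂)/2) − ΔQ ), where ΔQ = ( (Q₁−Q₂)² − 2(Q₁Q₂ − Q₂Q₁) )/4. -/
open Matrix

/-- The set of `t` for which `t • 1 - M` is singular is finite (roots of charpoly). -/
lemma finite_singular_set {n : ℕ} (M : Matrix (Fin n) (Fin n) ℂ) :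
    {t : ℂ | Matrix.det (t • (1 : Matrix (Fin n) (Fin n) ℂ) - M) = 0}.Finite := by
  rcases Nat.eq_zero_or_pos n with h | h
  · subst h
    have : ∀ t : ℂ, Matrix.det (t • (1 : Matrix (Fin 0) (Fin 0) ℂ) - M) = 1 := fun t =>
      Matrix.det_fin_zero
    simp [this]
  have hn : Nontrivial (Fin n) ∨ True := Or.inr trivial
  have key : ∀ t : ℂ, Matrix.det (t • (1 : Matrix (Fin n) (Fin n) ℂ) - M) =
      (Matrix.charpoly M).eval t := by
    intro t
    have h2 := (Polynomial.evalRingHom t).map_det (Matrix.charmatrix M)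
    simp only [Polynomial.coe_evalRingHom, RingHom.mapMatrix_apply] at h2
    rw [Matrix.charpoly, h2]
    congr 1
    ext i j
    by_cases hij : i = j <;>
      simp [Matrix.charmatrix_apply, Matrix.map_apply, Matrix.sub_apply, Matrix.smul_apply,
        Matrix.one_apply, Matrix.diagonal_apply, hij]
  have hne : Matrix.charpoly M ≠ 0 := (Matrix.charpoly_monic M).ne_zero
  have : {t : ℂ | Matrix.det (t • (1 : Matrix (Fin n) (Fin n) ℂ) - M) = 0} ⊆
      {t : ℂ | (Matrix.charpoly M).IsRoot t} := by
    intro t ht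
    simpa [Polynomial.IsRoot, ← key t] using ht
  exact (Polynomial.finite_setOf_isRoot hne).subset this

/-- Schur-type determinant formula for a block matrix with scalar off-diagonal blocks. -/
lemma det_fromBlocks_scalar_offdiag {n : ℕ} (A D : Matrix (Fin n) (Fin n) ℂ) (p : ℂ) :
    Matrix.det (Matrix.fromBlocks A (p • 1) (p • 1) D) =
      Matrix.det (A * D - (p * p) • 1) := by
  set f : ℂ → ℂ := fun t =>
    Matrix.det (Matrix.fromBlocks A (p • 1) (p • 1) (D + t • 1)) with hf
  set g : ℂ → ℂ := fun t => Matrix.det (A * (D + t • 1) - (p * p) • 1) with hg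
  have hfg : f = g := by
    have hdense : Dense {t : ℂ | Matrix.det (t • (1 : Matrix (Fin n) (Fin n) ℂ) - (-D)) = 0}ᶜ :=
      (finite_singular_set (-D)).countable.dense_compl ℂ
    have hfc : Continuous f := by
      have : Continuous fun t : ℂ => Matrix.fromBlocks A (p • 1) (p • 1) (D + t • 1) := by
        apply continuous_matrix
        intro i j
        cases i <;> cases j <;>
          · simp only [Matrix.fromBlocks_apply₁₁, Matrix.fromBlocks_apply₁₂,
              Matrix.fromBlocks_apply₂₁, Matrix.fromBlocks_apply₂₂, Matrix.add_apply,
              Matrix.smul_apply, smul_eq_mul]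
            fun_prop
      exact this.matrix_det
    have hgc : Continuous g := by
      have : Continuous fun t : ℂ => A * (D + t • 1) - (p * p) • 1 := by
        apply continuous_matrix
        intro i j
        simp only [Matrix.sub_apply, Matrix.mul_apply, Matrix.add_apply, Matrix.smul_apply,
          smul_eq_mul]
        fun_prop
      exact this.matrix_det
    apply Continuous.ext_on hdense hfc hgc
    intro t ht
    simp only [Set.mem_compl_iff, Set.mem_setOf_eq, sub_neg_eq_add] at ht
    have hdet : IsUnit (D + t • 1).det := by
      have : t • (1 : Matrix (Fin n) (Fin n) ℂ) + D = D + t • 1 := by abel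
      rw [this] at ht
      exact isUnit_iff_ne_zero.mpr ht
    have : Invertible (D + t • 1) := Matrix.invertibleOfIsUnitDet _ hdet
    rw [hf, hg]
    simp only
    rw [Matrix.det_fromBlocks₂₂]
    have hrw : A - (p • 1) * ⅟(D + t • 1) * (p • 1) =
        (A * (D + t • 1) - (p * p) • 1) * ⅟(D + t • 1) := by
      rw [Matrix.sub_mul]
      congr 1
      · rw [Matrix.mul_assoc, mul_invOf_self, Matrix.mul_one]
      · simp [Matrix.smul_mul, Matrix.mul_smul, smul_smul, Matrix.one_mul, Matrix.mul_one,
          mul_comm]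
    rw [hrw, Matrix.det_mul]
    calc (D + t • 1).det * ((A * (D + t • 1) - (p * p) • 1).det * (⅟(D + t • 1)).det)
        = (A * (D + t • 1) - (p * p) • 1).det * ((D + t • 1).det * (⅟(D + t • 1)).det) := by
          ring
      _ = (A * (D + t • 1) - (p * p) • 1).det * ((D + t • 1) * ⅟(D + t • 1)).det := by
          rw [Matrix.det_mul]
      _ = (A * (D + t • 1) - (p * p) • 1).det := by
          rw [mul_invOf_self, Matrix.det_one, mul_one]
  have := congrFun hfg 0
  simpa [hf, hg] using this

/-- Characteristic polynomial of the supra-Laplacian of a two-layer multiplex,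
expressed via the Schur-complement-type identity of Eq. (4) of the paper. -/
theorem charpoly_supraLaplacian_schur
    (N : ℕ) (Q1 Q2 : Matrix (Fin N) (Fin N) ℂ) (p : ℂ) (lam : ℂ) :
    Matrix.det
      (lam • (1 : Matrix (Fin N ⊕ Fin N) (Fin N ⊕ Fin N) ℂ) -
        Matrix.fromBlocks (Q1 + p • 1) (-(p • 1)) (-(p • 1)) (Q2 + p • 1)) =
    Matrix.det
      ((lam • (1 : Matrix (Fin N) (Fin N) ℂ) - (1 / 2 : ℂ) • (Q1 + Q2)) *
          ((lam - 2 * p) • (1 : Matrix (Fin N) (Fin N) ℂ) - (1 / 2 : ℂ) • (Q1 + Q2)) -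
        (1 / 4 : ℂ) • ((Q1 - Q2) ^ 2 - (2 : ℂ) • (Q1 * Q2 - Q2 * Q1))) := by
  set A : Matrix (Fin N) (Fin N) ℂ := (lam - p) • 1 - Q1 with hA
  set D : Matrix (Fin N) (Fin N) ℂ := (lam - p) • 1 - Q2 with hD
  have hblock :
      lam • (1 : Matrix (Fin N ⊕ Fin N) (Fin N ⊕ Fin N) ℂ) -
        Matrix.fromBlocks (Q1 + p • 1) (-(p • 1)) (-(p • 1)) (Q2 + p • 1) =
      Matrix.fromBlocks A (p • 1) (p • 1) D := by
    rw [← Matrix.fromBlocks_one, Matrix.fromBlocks_smul, sub_eq_add_neg,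
      Matrix.fromBlocks_neg, Matrix.fromBlocks_add]
    have e11 : lam • (1 : Matrix (Fin N) (Fin N) ℂ) + -(Q1 + p • 1) = A := by
      rw [hA]; module
    have e12 : lam • (0 : Matrix (Fin N) (Fin N) ℂ) + -(-(p • 1)) =
        (p • 1 : Matrix (Fin N) (Fin N) ℂ) := by
      simp
    have e22 : lam • (1 : Matrix (Fin N) (Fin N) ℂ) + -(Q2 + p • 1) = D := by
      rw [hD]; module
    rw [e11, e12, e22]
  rw [hblock, det_fromBlocks_scalar_offdiag]
  congr 1
  rw [hA, hD]
  simp only [pow_two, sub_mul, mul_sub, Matrix.smul_mul, Matrix.mul_smul, smul_smul,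
    Matrix.one_mul, Matrix.mul_one, smul_sub, smul_add, Matrix.add_mul, Matrix.mul_add,
    sub_smul, add_smul]
  module
end

section
/- Let Q₁ and Q₂ be N×N matrices (over ℝ or ℂ) and p a scalar, and let T be the 2N×2N orthogonal matrix T = (1/√2)·[[I, I],[−I, I]]. Then T·Q·Tᵀ = Q̃, where Q̃ is the block matrix [[(Q₁+Q₂)/2, (Q₂−Q₁)/2], [(Q₂−Q₁)/2, (Q₁+Q₂)/2 + 2p·I]]; in particular Q and Q̃ are similar and have the same characteristic polynomial. -/
open Matrix Polynomial

lemma charpoly_conj_aux {n : Type*} [Fintype n] [DecidableEq n] (P P' A : Matrix n n ℝ)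
    (h : P * P' = 1) : (P * A * P').charpoly = A.charpoly := by
  have hc : charmatrix (P * A * P') = P.map C * charmatrix A * P'.map C := by
    rw [charmatrix, charmatrix, mul_sub, sub_mul]
    congr 1
    · have hscalar : Matrix.scalar n (X : ℝ[X]) = (X : ℝ[X]) • 1 := by
        ext i j; simp [Matrix.scalar_apply, Matrix.smul_apply, Matrix.one_apply,
          Matrix.diagonal_apply, apply_ite (fun r => (X : ℝ[X]) * r)]
      rw [hscalar, Matrix.mul_smul, Matrix.mul_one, Matrix.smul_mul,
        ← Matrix.map_mul, h]
      simp
    · simp only [RingHom.mapMatrix_apply]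
      rw [← Matrix.map_mul, ← Matrix.map_mul]
  rw [Matrix.charpoly, Matrix.charpoly, hc, Matrix.det_mul, Matrix.det_mul]
  have h2 : (P.map (C : ℝ →+* ℝ[X])).det * (P'.map C).det = 1 := by
    rw [← Matrix.det_mul, ← Matrix.map_mul, h]
    simp
  calc (P.map (C : ℝ →+* ℝ[X])).det * (charmatrix A).det * (P'.map C).det
      = (charmatrix A).det * ((P.map C).det * (P'.map C).det) := by ring
    _ = (charmatrix A).det := by rw [h2, mul_one]
/-- The supra-Laplacian `Q` is conjugated by the orthogonal matrix
`T = (1/√2)·[[I, I],[−I, I]]` into the block matrix `Q̃` whose upper-left block is the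
integrated Laplacian `(Q₁+Q₂)/2`; in particular `Q` and `Q̃` are similar and share the
same characteristic polynomial. -/
theorem supraLaplacian_similarity
    (N : ℕ) (Q1 Q2 : Matrix (Fin N) (Fin N) ℝ) (p : ℝ) :
    ((Real.sqrt 2)⁻¹ •
        Matrix.fromBlocks (1 : Matrix (Fin N) (Fin N) ℝ) 1 (-1) 1) *
      Matrix.fromBlocks (Q1 + p • 1) (-(p • 1)) (-(p • 1)) (Q2 + p • 1) *
      ((Real.sqrt 2)⁻¹ •
        Matrix.fromBlocks (1 : Matrix (Fin N) (Fin N) ℝ) 1 (-1) 1)ᵀ =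
      Matrix.fromBlocks ((1 / 2 : ℝ) • (Q1 + Q2)) ((1 / 2 : ℝ) • (Q2 - Q1))
        ((1 / 2 : ℝ) • (Q2 - Q1)) ((1 / 2 : ℝ) • (Q1 + Q2) + (2 * p) • 1) ∧
    (Matrix.fromBlocks (Q1 + p • 1) (-(p • 1)) (-(p • 1)) (Q2 + p • 1)).charpoly =
      (Matrix.fromBlocks ((1 / 2 : ℝ) • (Q1 + Q2)) ((1 / 2 : ℝ) • (Q2 - Q1))
        ((1 / 2 : ℝ) • (Q2 - Q1)) ((1 / 2 : ℝ) • (Q1 + Q2) + (2 * p) • 1)).charpoly := by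
  have hsq : (Real.sqrt 2)⁻¹ * (Real.sqrt 2)⁻¹ = 1/2 := by
    rw [← mul_inv]
    rw [Real.mul_self_sqrt (by norm_num)]
    norm_num
  have hb : ∀ {A A' B B' C C' D D' : Matrix (Fin N) (Fin N) ℝ}, A = A' → B = B' → C = C' →
      D = D' → Matrix.fromBlocks A B C D = Matrix.fromBlocks A' B' C' D' := by
    rintro _ _ _ _ _ _ _ _ rfl rfl rfl rfl; rfl
  have hmain : ((Real.sqrt 2)⁻¹ •
        Matrix.fromBlocks (1 : Matrix (Fin N) (Fin N) ℝ) 1 (-1) 1) *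
      Matrix.fromBlocks (Q1 + p • 1) (-(p • 1)) (-(p • 1)) (Q2 + p • 1) *
      ((Real.sqrt 2)⁻¹ •
        Matrix.fromBlocks (1 : Matrix (Fin N) (Fin N) ℝ) 1 (-1) 1)ᵀ =
      Matrix.fromBlocks ((1 / 2 : ℝ) • (Q1 + Q2)) ((1 / 2 : ℝ) • (Q2 - Q1))
        ((1 / 2 : ℝ) • (Q2 - Q1)) ((1 / 2 : ℝ) • (Q1 + Q2) + (2 * p) • 1) := by
    rw [Matrix.transpose_smul, Matrix.smul_mul, Matrix.smul_mul, Matrix.mul_smul, smul_smul, hsq]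
    rw [Matrix.fromBlocks_transpose]
    simp only [Matrix.transpose_one, Matrix.transpose_neg]
    rw [Matrix.fromBlocks_multiply, Matrix.fromBlocks_multiply, Matrix.fromBlocks_smul]
    refine hb ?_ ?_ ?_ ?_ <;> simp only [Matrix.one_mul, Matrix.mul_one, Matrix.neg_mul, Matrix.mul_neg, Matrix.mul_add, Matrix.add_mul, neg_neg] <;> module
  have hTT : ((Real.sqrt 2)⁻¹ •
        Matrix.fromBlocks (1 : Matrix (Fin N) (Fin N) ℝ) 1 (-1) 1) *
      ((Real.sqrt 2)⁻¹ •
        Matrix.fromBlocks (1 : Matrix (Fin N) (Fin N) ℝ) 1 (-1) 1)ᵀ = (1 : Matrix (Fin N ⊕ Fin N) (Fin N ⊕ Fin N) ℝ) := by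
    rw [Matrix.transpose_smul, Matrix.smul_mul, Matrix.mul_smul, smul_smul, hsq]
    rw [Matrix.fromBlocks_transpose]
    simp only [Matrix.transpose_one, Matrix.transpose_neg]
    rw [Matrix.fromBlocks_multiply, Matrix.fromBlocks_smul,
      show (1 : Matrix (Fin N ⊕ Fin N) (Fin N ⊕ Fin N) ℝ) =
        Matrix.fromBlocks 1 0 0 1 from Matrix.fromBlocks_one.symm]
    refine hb ?_ ?_ ?_ ?_ <;> simp only [Matrix.one_mul, Matrix.mul_one, Matrix.neg_mul, Matrix.mul_neg, Matrix.mul_add, Matrix.add_mul, neg_neg] <;> module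
  refine ⟨hmain, ?_⟩
  rw [← hmain, charpoly_conj_aux _ _ _ hTT]
end

section
/- Let Q₁ and Q₂ be N×N real symmetric matrices (undirected layer Laplacians), let p ≥ 0 be real, and let Q be the supra-Laplacian, which is then real symmetric. Then the second smallest eigenvalue of Q is at most the second smallest eigenvalue of the integrated (aggregated) Laplacian (Q₁+Q₂)/2, i.e. λ₂(Q) ≤ λ₂((Q₁+Q₂)/2). Hence an undirected two-layer multiplex never diffuses faster than its aggregated network, regardless of the interlayer coupling strength p. -/
open Matrix

/-- The multiset of real eigenvalues of a real square matrix (the real roots of its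
characteristic polynomial, with multiplicity), sorted in non-decreasing order.
For a real symmetric matrix this lists all of its eigenvalues. -/
noncomputable def sortedEigenvalues {n : Type*} [Fintype n] [DecidableEq n]
    (M : Matrix n n ℝ) : List ℝ :=
  M.charpoly.roots.sort (· ≤ ·)

section Aux

open Polynomial

lemma charpoly_conj_of_mul_eq_one {R : Type*} [CommRing R] {n : Type*} [Fintype n] [DecidableEq n]
    (U A V : Matrix n n R) (hUV : U * V = 1) (hVU : V * U = 1) :
    (U * A * V).charpoly = A.charpoly := by
  unfold Matrix.charpoly
  have hmapUV : (U.map (C : R →+* R[X])) * (V.map C) = 1 := by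
    rw [← Matrix.map_mul, hUV]; simp
  have hmapVU : (V.map (C : R →+* R[X])) * (U.map C) = 1 := by
    rw [← Matrix.map_mul, hVU]; simp
  have key : charmatrix (U * A * V) = (U.map C) * charmatrix A * (V.map C) := by
    unfold charmatrix
    have h1 : (Matrix.scalar n (X : R[X])) = (U.map C) * (Matrix.scalar n (X : R[X])) * (V.map C) := by
      rw [← Matrix.scalar_commute X (fun r => Commute.all _ _) (U.map C), mul_assoc, hmapUV,
        mul_one]
    rw [mul_sub, sub_mul, ← h1]
    congr 1
    simp [RingHom.mapMatrix_apply, Matrix.map_mul]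
  rw [key, det_mul, det_mul, mul_comm, ← mul_assoc, ← det_mul, hmapVU, det_one, one_mul]

lemma charpoly_diagonal' {R : Type*} [CommRing R] {n : Type*} [Fintype n] [DecidableEq n]
    (d : n → R) : (Matrix.diagonal d).charpoly = ∏ i, (X - C (d i)) := by
  unfold Matrix.charpoly charmatrix
  have : (Matrix.scalar n (X : R[X])) - (C : R →+* R[X]).mapMatrix (diagonal d)
      = diagonal (fun i => X - C (d i)) := by
    rw [RingHom.mapMatrix_apply, Matrix.diagonal_map (by simp)]
    rw [show (Matrix.scalar n (X : R[X])) = diagonal (fun _ => X) from rfl, diagonal_sub]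
  rw [this, det_diagonal]

/-- The real charpoly roots of a real symmetric matrix are exactly its eigenvalues. -/
lemma roots_charpoly_isHermitian {n : Type*} [Fintype n] [DecidableEq n]
    {M : Matrix n n ℝ} (hM : M.IsHermitian) :
    M.charpoly.roots = Finset.univ.val.map hM.eigenvalues := by
  have hU := hM.spectral_theorem
  have h1 : (star (hM.eigenvectorUnitary : Matrix n n ℝ)) * (hM.eigenvectorUnitary : Matrix n n ℝ) = 1 :=
    Matrix.mem_unitaryGroup_iff'.mp (hM.eigenvectorUnitary).2
  have h2 : (hM.eigenvectorUnitary : Matrix n n ℝ) * (star (hM.eigenvectorUnitary : Matrix n n ℝ)) = 1 :=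
    Matrix.mem_unitaryGroup_iff.mp (hM.eigenvectorUnitary).2
  have : M.charpoly = (diagonal (RCLike.ofReal ∘ hM.eigenvalues) : Matrix n n ℝ).charpoly := by
    conv_lhs => rw [hU]
    exact charpoly_conj_of_mul_eq_one _ _ _ h2 h1
  rw [this, charpoly_diagonal']
  have : (∏ i, (X - C ((RCLike.ofReal ∘ hM.eigenvalues) i))) =
      ((Finset.univ.val.map hM.eigenvalues).map fun a => X - C a).prod := by
    rw [Multiset.map_map]
    rfl
  rw [this, roots_multiset_prod_X_sub_C]


lemma getD_sort_one_le {m : Multiset ℝ} {c x y : ℝ} (h : ({x, y} : Multiset ℝ) ≤ m)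
    (hx : x ≤ c) (hy : y ≤ c) : (m.sort (· ≤ ·)).getD 1 0 ≤ c := by
  classical
  by_contra hlt
  push_neg at hlt
  obtain ⟨r, hr⟩ := Multiset.le_iff_exists_add.mp h
  have hlen : 2 ≤ (m.sort (· ≤ ·)).length := by
    rw [Multiset.length_sort]
    calc 2 = Multiset.card ({x, y} : Multiset ℝ) := by simp
    _ ≤ Multiset.card m := Multiset.card_le_card h
  have hs : (m.sort (· ≤ ·)).Pairwise (· ≤ ·) := Multiset.pairwise_sort (s := m) (r := (· ≤ ·))
  have hLm : ((m.sort (· ≤ ·) : List ℝ) : Multiset ℝ) = m := m.sort_eq _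
  set L := m.sort (· ≤ ·) with hL
  match L, hlen, hs, hLm, hlt with
  | a :: b :: t, _, hs, hLm, hlt =>
    have hgd : (a :: b :: t).getD 1 0 = b := rfl
    rw [hgd] at hlt
    have ht : ∀ z ∈ t, b ≤ z := (List.pairwise_cons.mp (List.pairwise_cons.mp hs).2).1
    set p : ℝ → Prop := fun z => c < z with hp
    have hcount1 : Multiset.countP p m = Multiset.countP p r := by
      rw [hr, Multiset.countP_add]
      have : Multiset.countP p ({x, y} : Multiset ℝ) = 0 := by
        rw [Multiset.countP_eq_zero]
        intro z hz
        simp only [Multiset.insert_eq_cons, Multiset.mem_cons, Multiset.mem_singleton] at hz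
        rcases hz with rfl | rfl
        · exact fun hc => absurd hx (not_le.mpr hc)
        · exact fun hc => absurd hy (not_le.mpr hc)
      omega
    have hcard : Multiset.card m = Multiset.card r + 2 := by
      rw [hr, Multiset.card_add, show Multiset.card ({x, y} : Multiset ℝ) = 2 from by simp]
      omega
    have hcount2 : Multiset.card r + 1 ≤ Multiset.countP p m := by
      have hcoe : m = a ::ₘ b ::ₘ (t : Multiset ℝ) := by
        rw [← hLm]; rfl
      have h1 : Multiset.countP p (t : Multiset ℝ) = Multiset.card (t : Multiset ℝ) :=
        Multiset.countP_eq_card.mpr (fun z hz => lt_of_lt_of_le hlt (ht z (by exact_mod_cast hz)))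
      have hcard' : Multiset.card m = t.length + 2 := by
        rw [hcoe]; simp
      rw [hcoe, Multiset.countP_cons, Multiset.countP_cons, h1, if_pos hlt]
      simp only [Multiset.coe_card] at *
      omega
    have hle : Multiset.countP p r ≤ Multiset.card r := Multiset.countP_le_card _ _
    omega

lemma exists_two_le_getD {m : Multiset ℝ} (h : 2 ≤ Multiset.card m) :
    ∃ x y : ℝ, ({x, y} : Multiset ℝ) ≤ m ∧ x ≤ (m.sort (· ≤ ·)).getD 1 0 ∧
      y ≤ (m.sort (· ≤ ·)).getD 1 0 := by
  have hlen : 2 ≤ (m.sort (· ≤ ·)).length := by rwa [Multiset.length_sort]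
  have hs : (m.sort (· ≤ ·)).Pairwise (· ≤ ·) := Multiset.pairwise_sort (s := m) (r := (· ≤ ·))
  have hLm : ((m.sort (· ≤ ·) : List ℝ) : Multiset ℝ) = m := m.sort_eq _
  match hL : m.sort (· ≤ ·), hlen, hs, hLm with
  | a :: b :: t, _, hs, hLm =>
    have hgd : (a :: b :: t).getD 1 0 = b := rfl
    rw [hgd]
    refine ⟨a, b, ?_, (List.pairwise_cons.mp hs).1 b (by simp), le_refl _⟩
    rw [← hLm]
    have hsub : [a, b].Sublist (a :: b :: t) :=
      List.cons_sublist_cons.mpr (List.cons_sublist_cons.mpr (List.nil_sublist t))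
    have := hsub.subperm
    exact_mod_cast Multiset.coe_le.mpr this


variable {n : Type*} [Fintype n] [DecidableEq n]

omit [DecidableEq n] in
lemma inner_euclidean_eq_sum (x y : EuclideanSpace ℝ n) :
    (inner ℝ x y : ℝ) = ∑ i, x i * y i := by
  simp [PiLp.inner_apply, mul_comm]

lemma repr_mulVec {M : Matrix n n ℝ} (hM : M.IsHermitian) (x : EuclideanSpace ℝ n) (i : n) :
    hM.eigenvectorBasis.repr (WithLp.toLp 2 (M *ᵥ x) : EuclideanSpace ℝ n) i
      = hM.eigenvalues i * hM.eigenvectorBasis.repr x i := by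
  have hsymm : ∀ j k, M j k = M k j := by
    intro j k
    have := congrFun (congrFun hM j) k
    rw [Matrix.conjTranspose_apply, star_trivial] at this
    exact this.symm
  rw [OrthonormalBasis.repr_apply_apply, OrthonormalBasis.repr_apply_apply,
    inner_euclidean_eq_sum, inner_euclidean_eq_sum]
  calc ∑ j, hM.eigenvectorBasis i j * (M *ᵥ (x : n → ℝ)) j
      = ∑ j, ∑ k, hM.eigenvectorBasis i j * (M j k * x k) := by
        refine Finset.sum_congr rfl fun j _ => ?_
        rw [Matrix.mulVec, dotProduct, Finset.mul_sum]
    _ = ∑ k, (M *ᵥ ⇑(hM.eigenvectorBasis i)) k * x k := by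
        rw [Finset.sum_comm]
        refine Finset.sum_congr rfl fun k _ => ?_
        rw [Matrix.mulVec, dotProduct, Finset.sum_mul]
        refine Finset.sum_congr rfl fun j _ => ?_
        rw [hsymm j k]; ring
    _ = hM.eigenvalues i * ∑ j, hM.eigenvectorBasis i j * x j := by
        rw [hM.mulVec_eigenvectorBasis, Finset.mul_sum]
        refine Finset.sum_congr rfl fun j _ => ?_
        simp [mul_assoc]

omit [DecidableEq n] in
lemma inner_eq_sum_repr (b : OrthonormalBasis n ℝ (EuclideanSpace ℝ n))
    (x y : EuclideanSpace ℝ n) :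
    (inner ℝ x y : ℝ) = ∑ i, b.repr x i * b.repr y i := by
  rw [← b.repr.inner_map_map x y, inner_euclidean_eq_sum]

lemma inner_mulVec_eq {M : Matrix n n ℝ} (hM : M.IsHermitian) (x : EuclideanSpace ℝ n) :
    (inner ℝ x (WithLp.toLp 2 (M *ᵥ x) : EuclideanSpace ℝ n) : ℝ)
      = ∑ i, hM.eigenvalues i * (hM.eigenvectorBasis.repr x i)^2 := by
  rw [inner_eq_sum_repr hM.eigenvectorBasis]
  refine Finset.sum_congr rfl fun i _ => ?_
  rw [repr_mulVec hM]
  ring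

lemma inner_self_eq' {M : Matrix n n ℝ} (hM : M.IsHermitian) (x : EuclideanSpace ℝ n) :
    (inner ℝ x x : ℝ) = ∑ i, (hM.eigenvectorBasis.repr x i)^2 := by
  rw [inner_eq_sum_repr hM.eigenvectorBasis]
  refine Finset.sum_congr rfl fun i _ => ?_
  ring

/-- If a two-parameter family of test vectors has Rayleigh quotient `≤ μ`, then the symmetric
matrix `M` has at least two eigenvalues `≤ μ` (at distinct indices). -/
lemma exists_two_eigenvalues_le {M : Matrix n n ℝ} (hM : M.IsHermitian) {μ : ℝ}
    (w₁ w₂ : EuclideanSpace ℝ n)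
    (hray : ∀ α β : ℝ,
      (inner ℝ (α•w₁+β•w₂ : EuclideanSpace ℝ n) (WithLp.toLp 2 (M *ᵥ (α•w₁+β•w₂ : EuclideanSpace ℝ n)) : EuclideanSpace ℝ n) : ℝ)
        ≤ μ * inner ℝ (α•w₁+β•w₂ : EuclideanSpace ℝ n) (α•w₁+β•w₂ : EuclideanSpace ℝ n))
    (hpos : ∀ α β : ℝ, ¬(α = 0 ∧ β = 0) →
      (0:ℝ) < inner ℝ (α•w₁+β•w₂ : EuclideanSpace ℝ n) (α•w₁+β•w₂ : EuclideanSpace ℝ n)) :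
    ∃ k l : n, k ≠ l ∧ hM.eigenvalues k ≤ μ ∧ hM.eigenvalues l ≤ μ := by
  classical
  set S : Finset n := Finset.univ.filter (fun i => hM.eigenvalues i ≤ μ) with hS
  by_cases hcard : 2 ≤ S.card
  · obtain ⟨k, hk, l, hl, hkl⟩ := Finset.one_lt_card.mp hcard
    exact ⟨k, l, hkl, (Finset.mem_filter.mp hk).2, (Finset.mem_filter.mp hl).2⟩
  exfalso
  push_neg at hcard
  have hcard1 : S.card ≤ 1 := by omega
  -- choose coefficients killing the (at most one) coordinate in S
  obtain ⟨α, β, hne, hker⟩ : ∃ α β : ℝ, ¬(α = 0 ∧ β = 0) ∧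
      ∀ i ∈ S, α * hM.eigenvectorBasis.repr w₁ i + β * hM.eigenvectorBasis.repr w₂ i = 0 := by
    rcases S.eq_empty_or_nonempty with hemp | ⟨j, hj⟩
    · exact ⟨1, 0, by simp, by simp [hemp]⟩
    · have hSj : ∀ i ∈ S, i = j := by
        intro i hi
        exact Finset.card_le_one.mp hcard1 i hi j hj
      set t₁ := hM.eigenvectorBasis.repr w₁ j
      set t₂ := hM.eigenvectorBasis.repr w₂ j
      by_cases h0 : t₁ = 0 ∧ t₂ = 0
      · refine ⟨1, 0, by simp, fun i hi => ?_⟩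
        rw [hSj i hi]
        simp only [one_mul, zero_mul, add_zero]
        exact h0.1
      · refine ⟨t₂, -t₁, ?_, fun i hi => by rw [hSj i hi]; ring⟩
        intro ⟨ha, hb⟩
        exact h0 ⟨by simpa using hb, ha⟩
  set x : EuclideanSpace ℝ n := α•w₁+β•w₂ with hx
  have hc : ∀ i, hM.eigenvectorBasis.repr x i
      = α * hM.eigenvectorBasis.repr w₁ i + β * hM.eigenvectorBasis.repr w₂ i := by
    intro i
    rw [hx, map_add, _root_.map_smul, _root_.map_smul]
    simp [PiLp.add_apply, PiLp.smul_apply, smul_eq_mul]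
  have hxx : (0:ℝ) < inner ℝ x x := hpos α β hne
  have hsum : (0:ℝ) < ∑ i, (hM.eigenvectorBasis.repr x i)^2 := by
    rwa [inner_self_eq' hM x] at hxx
  obtain ⟨i₀, -, hi₀⟩ : ∃ i ∈ Finset.univ, (hM.eigenvectorBasis.repr x i)^2 ≠ 0 := by
    by_contra hall
    push_neg at hall
    rw [Finset.sum_eq_zero (fun i hi => hall i hi)] at hsum
    exact lt_irrefl 0 hsum
  have hi₀S : i₀ ∉ S := by
    intro hmem
    apply hi₀
    rw [hc i₀, hker i₀ hmem]
    norm_num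
  have hray' : ∑ i, hM.eigenvalues i * (hM.eigenvectorBasis.repr x i)^2
      ≤ μ * ∑ i, (hM.eigenvectorBasis.repr x i)^2 := by
    have := hray α β
    rwa [inner_mulVec_eq hM x, inner_self_eq' hM x] at this
  have hpos' : (0:ℝ) < ∑ i, (hM.eigenvalues i - μ) * (hM.eigenvectorBasis.repr x i)^2 := by
    refine Finset.sum_pos' (fun i _ => ?_) ⟨i₀, Finset.mem_univ i₀, ?_⟩
    · by_cases hiS : i ∈ S
      · rw [hc i, hker i hiS]
        norm_num
      · have : μ < hM.eigenvalues i := by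
          by_contra hle
          exact hiS (Finset.mem_filter.mpr ⟨Finset.mem_univ i, not_lt.mp hle⟩)
        exact mul_nonneg (by linarith) (sq_nonneg _)
    · have hμ : μ < hM.eigenvalues i₀ := by
        by_contra hle
        exact hi₀S (Finset.mem_filter.mpr ⟨Finset.mem_univ i₀, not_lt.mp hle⟩)
      have : (0:ℝ) < (hM.eigenvectorBasis.repr x i₀)^2 := lt_of_le_of_ne (sq_nonneg _) (Ne.symm hi₀)
      exact mul_pos (by linarith) this
  have : ∑ i, (hM.eigenvalues i - μ) * (hM.eigenvectorBasis.repr x i)^2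
      = (∑ i, hM.eigenvalues i * (hM.eigenvectorBasis.repr x i)^2)
        - μ * ∑ i, (hM.eigenvectorBasis.repr x i)^2 := by
    rw [Finset.mul_sum, ← Finset.sum_sub_distrib]
    refine Finset.sum_congr rfl fun i _ => ?_
    ring
  rw [this] at hpos'
  linarith

end Aux

/-- For an undirected (symmetric) two-layer multiplex with nonnegative interlayer
coupling `p`, the second smallest eigenvalue of the supra-Laplacian never exceeds the
second smallest eigenvalue of the integrated Laplacian `(Q₁+Q₂)/2`: an undirected
multiplex never diffuses faster than its aggregated network. -/
theorem undirected_multiplex_no_superdiffusion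
    (N : ℕ) (hN : 2 ≤ N) (Q1 Q2 : Matrix (Fin N) (Fin N) ℝ)
    (h1 : Q1.IsSymm) (h2 : Q2.IsSymm) (p : ℝ) (hp : 0 ≤ p) :
    (sortedEigenvalues
        (Matrix.fromBlocks (Q1 + p • 1) (-(p • 1)) (-(p • 1)) (Q2 + p • 1))).getD 1 0 ≤
      (sortedEigenvalues ((1 / 2 : ℝ) • (Q1 + Q2))).getD 1 0 := by
  classical
  set Q : Matrix (Fin N ⊕ Fin N) (Fin N ⊕ Fin N) ℝ :=
    Matrix.fromBlocks (Q1 + p • 1) (-(p • 1)) (-(p • 1)) (Q2 + p • 1) with hQdef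
  set A : Matrix (Fin N) (Fin N) ℝ := (1 / 2 : ℝ) • (Q1 + Q2) with hAdef
  have h1' : Q1ᵀ = Q1 := h1
  have h2' : Q2ᵀ = Q2 := h2
  have hAH : A.IsHermitian := by
    rw [Matrix.IsHermitian, Matrix.conjTranspose_eq_transpose_of_trivial, hAdef,
      Matrix.transpose_smul, Matrix.transpose_add, h1', h2']
  have hQH : Q.IsHermitian := by
    rw [Matrix.IsHermitian, Matrix.conjTranspose_eq_transpose_of_trivial, hQdef,
      Matrix.fromBlocks_transpose]
    congr 1 <;>
      simp [Matrix.transpose_add, Matrix.transpose_smul, Matrix.transpose_neg, h1', h2']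
  set a := hAH.eigenvalues with ha
  set μ := (sortedEigenvalues A).getD 1 0 with hμ
  have hμ' : μ = (A.charpoly.roots.sort (· ≤ ·)).getD 1 0 := rfl
  have hrootsA : A.charpoly.roots = Finset.univ.val.map a := roots_charpoly_isHermitian hAH
  have hcardA : 2 ≤ Multiset.card A.charpoly.roots := by
    rw [hrootsA]; simpa using hN
  obtain ⟨x, y, hxy, hxμ, hyμ⟩ := exists_two_le_getD hcardA
  rw [← hμ'] at hxμ hyμ
  have hcount : 2 ≤ Multiset.countP (fun z => z ≤ μ) A.charpoly.roots := by
    have hc2 : Multiset.countP (fun z => z ≤ μ) ({x, y} : Multiset ℝ) = 2 := by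
      rw [Multiset.countP_eq_card.mpr ?_]
      · simp
      · intro z hz
        simp only [Multiset.insert_eq_cons, Multiset.mem_cons, Multiset.mem_singleton] at hz
        rcases hz with rfl | rfl
        · exact hxμ
        · exact hyμ
    rw [← hc2]
    exact Multiset.countP_le_of_le _ hxy
  rw [hrootsA, Multiset.countP_map] at hcount
  have hfin : 2 ≤ (Finset.univ.filter (fun i => a i ≤ μ)).card := by
    rw [Finset.card, Finset.filter_val]
    exact hcount
  obtain ⟨k, hk, l, hl, hkl⟩ := Finset.one_lt_card.mp hfin
  have hak : a k ≤ μ := (Finset.mem_filter.mp hk).2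
  have hal : a l ≤ μ := (Finset.mem_filter.mp hl).2
  set u := hAH.eigenvectorBasis with hu
  set w₁ : EuclideanSpace ℝ (Fin N ⊕ Fin N) := WithLp.toLp 2 (Sum.elim (u k) (u k)) with hw₁
  set w₂ : EuclideanSpace ℝ (Fin N ⊕ Fin N) := WithLp.toLp 2 (Sum.elim (u l) (u l)) with hw₂
  -- representation of combinations in the eigenbasis of A
  have hrepr : ∀ α β : ℝ, ∀ i, u.repr (α • u k + β • u l : EuclideanSpace ℝ (Fin N)) i
      = α * (if i = k then 1 else 0) + β * (if i = l then 1 else 0) := by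
    intro α β i
    rw [map_add, _root_.map_smul, _root_.map_smul, OrthonormalBasis.repr_self,
      OrthonormalBasis.repr_self]
    simp [EuclideanSpace.single_apply]
  -- Rayleigh bound for A on span{u k, u l}, in explicit sum form
  have hA_ray : ∀ α β : ℝ,
      (∑ i, (α • u k + β • u l : EuclideanSpace ℝ (Fin N)) i
          * (A *ᵥ (α • u k + β • u l : EuclideanSpace ℝ (Fin N))) i)
      ≤ μ * ∑ i, (α • u k + β • u l : EuclideanSpace ℝ (Fin N)) i
          * (α • u k + β • u l : EuclideanSpace ℝ (Fin N)) i := by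
    intro α β
    have e1 := inner_mulVec_eq hAH (α • u k + β • u l : EuclideanSpace ℝ (Fin N))
    rw [inner_euclidean_eq_sum] at e1
    simp only [WithLp.ofLp_toLp] at e1
    have e2 := inner_self_eq' hAH (α • u k + β • u l : EuclideanSpace ℝ (Fin N))
    rw [inner_euclidean_eq_sum] at e2
    rw [e1, e2, Finset.mul_sum]
    refine Finset.sum_le_sum fun i _ => ?_
    by_cases hik : i = k
    · subst hik
      exact mul_le_mul_of_nonneg_right hak (sq_nonneg _)
    · by_cases hil : i = l
      · subst hil
        exact mul_le_mul_of_nonneg_right hal (sq_nonneg _)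
      · rw [hrepr α β i, if_neg hik, if_neg hil]
        simp
  have hA_pos : ∀ α β : ℝ, ¬(α = 0 ∧ β = 0) →
      (0:ℝ) < ∑ i, (α • u k + β • u l : EuclideanSpace ℝ (Fin N)) i
          * (α • u k + β • u l : EuclideanSpace ℝ (Fin N)) i := by
    intro α β hne
    have e2 := inner_self_eq' hAH (α • u k + β • u l : EuclideanSpace ℝ (Fin N))
    rw [inner_euclidean_eq_sum] at e2
    rw [e2]
    have hαβ : 0 < α^2 + β^2 := by
      rcases not_and_or.mp hne with h | h
      · have : 0 < α^2 := by positivity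
        nlinarith [sq_nonneg β]
      · have : 0 < β^2 := by positivity
        nlinarith [sq_nonneg α]
    have hpair : ∑ i ∈ ({k, l} : Finset (Fin N)),
        (u.repr (α • u k + β • u l : EuclideanSpace ℝ (Fin N)) i)^2 = α^2 + β^2 := by
      rw [Finset.sum_pair hkl, hrepr α β k, hrepr α β l, if_pos rfl, if_pos rfl,
        if_neg hkl, if_neg (Ne.symm hkl)]
      ring
    have hbig : α^2 + β^2
        ≤ ∑ i, (u.repr (α • u k + β • u l : EuclideanSpace ℝ (Fin N)) i)^2 := by
      rw [← hpair]
      exact Finset.sum_le_sum_of_subset_of_nonneg (Finset.subset_univ _)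
        (fun i _ _ => sq_nonneg _)
    linarith
  -- decompose supra-Laplacian quadratic form
  have hQmul : ∀ v : EuclideanSpace ℝ (Fin N),
      Q *ᵥ (Sum.elim v v) = Sum.elim (Q1 *ᵥ v) (Q2 *ᵥ v) := by
    intro v
    rw [hQdef, Matrix.fromBlocks_mulVec]
    congr 1 <;>
      simp [Matrix.add_mulVec, Matrix.neg_mulVec, Matrix.smul_mulVec, Matrix.one_mulVec]
  have hAy : ∀ (v : EuclideanSpace ℝ (Fin N)) (i : Fin N),
      (A *ᵥ v) i = (1/2) * ((Q1 *ᵥ v) i + (Q2 *ᵥ v) i) := by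
    intro v i
    rw [hAdef, Matrix.smul_mulVec, Matrix.add_mulVec]
    simp
  obtain ⟨k', l', hkl', hk', hl'⟩ := exists_two_eigenvalues_le hQH (μ := μ) w₁ w₂
    (fun α β => by
      have hxel : (α•w₁+β•w₂ : EuclideanSpace ℝ (Fin N ⊕ Fin N))
          = WithLp.toLp 2 (Sum.elim (α • u k + β • u l : EuclideanSpace ℝ (Fin N))
              (α • u k + β • u l : EuclideanSpace ℝ (Fin N))) := by
        ext i
        cases i <;> simp [hw₁, hw₂, PiLp.add_apply, PiLp.smul_apply]
      rw [inner_euclidean_eq_sum, inner_euclidean_eq_sum, hxel]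
      simp only [WithLp.ofLp_toLp, hQmul (α • u k + β • u l : EuclideanSpace ℝ (Fin N)), Fintype.sum_sum_type, Sum.elim_inl, Sum.elim_inr]
      have hcomb : ∑ i, (α • u k + β • u l : EuclideanSpace ℝ (Fin N)) i
            * (Q1 *ᵥ (α • u k + β • u l : EuclideanSpace ℝ (Fin N))) i
          + ∑ i, (α • u k + β • u l : EuclideanSpace ℝ (Fin N)) i
            * (Q2 *ᵥ (α • u k + β • u l : EuclideanSpace ℝ (Fin N))) i
          = 2 * ∑ i, (α • u k + β • u l : EuclideanSpace ℝ (Fin N)) i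
            * (A *ᵥ (α • u k + β • u l : EuclideanSpace ℝ (Fin N))) i := by
        rw [Finset.mul_sum, ← Finset.sum_add_distrib]
        refine Finset.sum_congr rfl fun i _ => ?_
        rw [hAy]
        ring
      rw [hcomb]
      have := hA_ray α β
      linarith)
    (fun α β hne => by
      have hxel : (α•w₁+β•w₂ : EuclideanSpace ℝ (Fin N ⊕ Fin N))
          = WithLp.toLp 2 (Sum.elim (α • u k + β • u l : EuclideanSpace ℝ (Fin N))
              (α • u k + β • u l : EuclideanSpace ℝ (Fin N))) := by
        ext i
        cases i <;> simp [hw₁, hw₂, PiLp.add_apply, PiLp.smul_apply]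
      rw [inner_euclidean_eq_sum, hxel]
      simp only [WithLp.ofLp_toLp, Fintype.sum_sum_type, Sum.elim_inl, Sum.elim_inr]
      have := hA_pos α β hne
      linarith)
  have hrootsQ : Q.charpoly.roots = Finset.univ.val.map hQH.eigenvalues :=
    roots_charpoly_isHermitian hQH
  have hsub : ({hQH.eigenvalues k', hQH.eigenvalues l'} : Multiset ℝ) ≤ Q.charpoly.roots := by
    rw [hrootsQ]
    have hnodup : ({k', l'} : Multiset (Fin N ⊕ Fin N)).Nodup := by
      simp [hkl']
    have hsub' : ({k', l'} : Multiset (Fin N ⊕ Fin N)) ≤ Finset.univ.val := by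
      rw [Multiset.le_iff_subset hnodup]
      intro z _
      simp
    have := Multiset.map_le_map (f := hQH.eigenvalues) hsub'
    simpa using this
  exact getD_sort_one_le hsub hk' hl'
end

section
/- Let Q₁ be an N×N complex matrix, let p be a scalar, and let Q be the supra-Laplacian of the multiplex with two identical layers Q₂ = Q₁. Then the characteristic polynomial of Q factors as det(λ·I₂ₙ − Q) = det(λ·I − Q₁)·det((λ−2p)·I − Q₁); equivalently, the multiset of eigenvalues of Q is the union of the multiset of eigenvalues of Q₁ and the multiset of eigenvalues of Q₁ shifted by 2p. -/
open Matrix Polynomial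

/-- det [[A,B],[B,A]] = det(A+B) det(A-B). -/
lemma det_fromBlocks_sym {n : Type*} [Fintype n] [DecidableEq n] {R : Type*} [CommRing R]
    (A B : Matrix n n R) :
    (Matrix.fromBlocks A B B A).det = (A + B).det * (A - B).det := by
  have key : Matrix.fromBlocks A B B A =
      Matrix.fromBlocks 1 0 1 1 * Matrix.fromBlocks (A + B) B 0 (A - B) *
        Matrix.fromBlocks 1 0 (-1) 1 := by
    simp [Matrix.fromBlocks_multiply, Matrix.mul_neg]
  rw [key, det_mul, det_mul, det_fromBlocks_zero₁₂, det_fromBlocks_zero₁₂,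
    det_fromBlocks_zero₂₁, det_one]
  ring

lemma charmatrix_add_smul_one {n : Type*} [Fintype n] [DecidableEq n] {R : Type*} [CommRing R]
    (M : Matrix n n R) (c : R) :
    charmatrix (M + c • 1) = charmatrix M - (c • (1 : Matrix n n R)).map C := by
  ext i j
  by_cases h : i = j <;>
    simp [h, charmatrix_apply, Matrix.map_apply, Matrix.one_apply, Matrix.smul_apply,
      diagonal_apply] <;> ring

lemma charpoly_add_smul_one {n : Type*} [Fintype n] [DecidableEq n] {R : Type*} [CommRing R]
    (M : Matrix n n R) (c : R) :
    (M + c • 1).charpoly = M.charpoly.comp (X - C c) := by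
  have hmap : charmatrix (M + c • 1) =
      (charmatrix M).map (fun q => q.comp (X - C c)) := by
    ext i j
    by_cases h : i = j <;>
      simp [h, charmatrix_apply, Matrix.map_apply, Matrix.one_apply, Matrix.smul_apply,
        diagonal_apply] <;> ring
  have : (charmatrix M).map (fun q => q.comp (X - C c)) =
      (Polynomial.compRingHom (X - C c)).mapMatrix (charmatrix M) := rfl
  rw [Matrix.charpoly, hmap, this, ← RingHom.map_det]
  rfl

lemma roots_charpoly_add_smul_one {n : ℕ} (M : Matrix (Fin n) (Fin n) ℂ) (c : ℂ) :
    (M + c • 1).charpoly.roots = M.charpoly.roots.map (fun μ => μ + c) := by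
  have hP : M.charpoly = (M.charpoly.roots.map (fun μ => X - C μ)).prod :=
    (IsAlgClosed.splits M.charpoly).eq_prod_roots_of_monic (Matrix.charpoly_monic M)
  have hcomp : (M + c • 1).charpoly =
      ((M.charpoly.roots.map (fun μ => μ + c)).map (fun μ => X - C μ)).prod := by
    rw [charpoly_add_smul_one]
    conv_lhs => rw [hP]
    rw [multiset_prod_comp, Multiset.map_map, Multiset.map_map]
    congr 1
    apply Multiset.map_congr rfl
    intro μ _
    simp only [Function.comp_apply, sub_comp, X_comp, C_comp, map_add]
    ring_nf
  rw [hcomp, roots_multiset_prod_X_sub_C]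

/-- For a multiplex of two identical layers `Q₂ = Q₁`, the characteristic polynomial of
the supra-Laplacian factors as `det(λI − Q) = det(λI − Q₁) · det((λ−2p)I − Q₁)`;
equivalently, the eigenvalue multiset of `Q` is the union of the eigenvalue multiset of
`Q₁` and the eigenvalue multiset of `Q₁` shifted by `2p`. -/
theorem identical_layers_charpoly_factorization
    (N : ℕ) (Q1 : Matrix (Fin N) (Fin N) ℂ) (p : ℂ) :
    (∀ lam : ℂ,
      Matrix.det
        (lam • (1 : Matrix (Fin N ⊕ Fin N) (Fin N ⊕ Fin N) ℂ) -
          Matrix.fromBlocks (Q1 + p • 1) (-(p • 1)) (-(p • 1)) (Q1 + p • 1)) =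
      Matrix.det (lam • (1 : Matrix (Fin N) (Fin N) ℂ) - Q1) *
        Matrix.det ((lam - 2 * p) • (1 : Matrix (Fin N) (Fin N) ℂ) - Q1)) ∧
    (Matrix.fromBlocks (Q1 + p • 1) (-(p • 1)) (-(p • 1)) (Q1 + p • 1)).charpoly.roots =
      Q1.charpoly.roots + Q1.charpoly.roots.map (fun μ => μ + 2 * p) := by
  constructor
  · intro lam
    have h1 : lam • (1 : Matrix (Fin N ⊕ Fin N) (Fin N ⊕ Fin N) ℂ) -
        Matrix.fromBlocks (Q1 + p • 1) (-(p • 1)) (-(p • 1)) (Q1 + p • 1) =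
        Matrix.fromBlocks (lam • 1 - (Q1 + p • 1)) (p • 1) (p • 1)
          (lam • 1 - (Q1 + p • 1)) := by
      ext (i | i) (j | j) <;>
        simp [Matrix.one_apply, Matrix.smul_apply, Matrix.sub_apply]
    rw [h1, det_fromBlocks_sym]
    congr 2
    · abel
    · have h0 : ((lam - 2 * p) • (1 : Matrix (Fin N) (Fin N) ℂ)) =
          lam • 1 - (2 * p) • 1 := by rw [sub_smul]
      have h2 : ((2 * p) • (1 : Matrix (Fin N) (Fin N) ℂ)) = p • 1 + p • 1 := by
        rw [two_mul, add_smul]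
      rw [h0, h2]; abel
  · have key : (Matrix.fromBlocks (Q1 + p • 1) (-(p • 1)) (-(p • 1))
        (Q1 + p • 1)).charpoly = Q1.charpoly * (Q1 + (2 * p) • 1).charpoly := by
      rw [Matrix.charpoly, charmatrix_fromBlocks]
      have hneg : -((-(p • (1 : Matrix (Fin N) (Fin N) ℂ))).map (C : ℂ → ℂ[X])) =
          (p • (1 : Matrix (Fin N) (Fin N) ℂ)).map (C : ℂ → ℂ[X]) := by
        ext i j; simp
      rw [hneg, det_fromBlocks_sym]
      congr 1
      · rw [charmatrix_add_smul_one, sub_add_cancel, Matrix.charpoly]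
      · rw [Matrix.charpoly, charmatrix_add_smul_one, charmatrix_add_smul_one]
        congr 1
        have h2 : (((2 * p) • (1 : Matrix (Fin N) (Fin N) ℂ)).map (C : ℂ → ℂ[X])) =
            (p • (1 : Matrix (Fin N) (Fin N) ℂ)).map (C : ℂ → ℂ[X]) +
              (p • (1 : Matrix (Fin N) (Fin N) ℂ)).map (C : ℂ → ℂ[X]) := by
          ext i j
          by_cases h : i = j <;> simp [h, Matrix.one_apply, two_mul]
        rw [h2]; abel
    rw [key, Polynomial.roots_mul
      (mul_ne_zero (Matrix.charpoly_monic Q1).ne_zero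
        (Matrix.charpoly_monic _).ne_zero),
      roots_charpoly_add_smul_one]
end

section
/- Let X be an n×n complex matrix with eigenvalues λ₁,…,λₙ (with multiplicity), and let μ₁ ≤ … ≤ μₙ be the eigenvalues of the Hermitian part Re X = (X + Xᴴ)/2. Then for every k with 1 ≤ k ≤ n, the sum of the k largest values among Re λ₁,…,Re λₙ is at most μ_{n−k+1} + … + μₙ, the sum of the k largest eigenvalues of Re X. Moreover, the total sums agree: Σⱼ Re λⱼ = Σⱼ μⱼ (both equal Re tr X). -/
open Matrix Polynomial

lemma charpoly_conj_unitary {m : Type*} [Fintype m] [DecidableEq m]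
    (A : Matrix m m ℂ) (U : Matrix m m ℂ) (hU : U ∈ Matrix.unitaryGroup m ℂ) :
    (star U * A * U).charpoly = A.charpoly := by
  have h1 : star U * U = 1 := (Matrix.mem_unitaryGroup_iff').mp hU
  have h2 : U * star U = 1 := (Matrix.mem_unitaryGroup_iff).mp hU
  have hmap1 : (star U).map (C : ℂ →+* ℂ[X]) * U.map C = 1 := by
    rw [← Matrix.map_mul, h1]; simp
  have key : charmatrix (star U * A * U) =
      (star U).map (C : ℂ →+* ℂ[X]) * charmatrix A * U.map C := by
    rw [charmatrix, charmatrix, Matrix.mul_sub, Matrix.sub_mul]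
    congr 1
    · have hc := (Matrix.scalar_commute (X : ℂ[X]) (fun r' => Commute.all _ _)
        (U.map (C : ℂ →+* ℂ[X]))).eq
      rw [mul_assoc, hc, ← mul_assoc, hmap1, one_mul]
    · show (RingHom.mapMatrix (C : ℂ →+* ℂ[X])) (star U * A * U) = _
      rw [_root_.map_mul, _root_.map_mul]
      rfl
  rw [Matrix.charpoly, key, Matrix.det_mul, Matrix.det_mul, Matrix.charpoly]
  have h3 : ((star U).map (C : ℂ →+* ℂ[X])).det * (U.map C).det = 1 := by
    rw [← Matrix.det_mul, hmap1, Matrix.det_one]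
  calc ((star U).map (C : ℂ →+* ℂ[X])).det * (charmatrix A).det * (U.map C).det
      = ((star U).map (C : ℂ →+* ℂ[X])).det * (U.map C).det * (charmatrix A).det := by ring
    _ = (charmatrix A).det := by rw [h3, one_mul]

lemma multiset_exists_of_le_map {α β : Type*} [DecidableEq α] [DecidableEq β] {f : α → β}
    {s : Multiset α} {t : Multiset β} (h : t ≤ s.map f) : ∃ s' ≤ s, t = s'.map f := by
  induction t using Multiset.induction generalizing s with
  | empty => exact ⟨0, Multiset.zero_le _, rfl⟩
  | cons a t ih =>
    have ha : a ∈ s.map f := Multiset.mem_of_le h (Multiset.mem_cons_self a t)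
    obtain ⟨x, hx, rfl⟩ := Multiset.mem_map.mp ha
    have h2 : t ≤ (s.erase x).map f := by
      have h3 := Multiset.erase_le_erase (f x) h
      rwa [Multiset.erase_cons_head, ← Multiset.map_erase_of_mem _ _ hx] at h3
    obtain ⟨s', hs', rfl⟩ := ih h2
    exact ⟨x ::ₘ s', by
        calc x ::ₘ s' ≤ x ::ₘ s.erase x := Multiset.cons_le_cons x hs'
        _ = s := Multiset.cons_erase hx, by simp⟩

lemma exists_unitary_diag : ∀ (n : ℕ) (X : Matrix (Fin n) (Fin n) ℂ),
    ∃ U ∈ Matrix.unitaryGroup (Fin n) ℂ,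
      X.charpoly.roots =
        Multiset.map (fun i => (star U * X * U) i i) Finset.univ.val := by
  intro n
  induction n with
  | zero =>
    intro X
    refine ⟨1, one_mem _, ?_⟩
    have h1 : X.charpoly = 1 := by
      simp [Matrix.charpoly, Matrix.det_isEmpty]
    simp [h1]
  | succ n ih =>
    intro X
    -- eigenvector
    obtain ⟨μ, hμ⟩ := Module.End.exists_eigenvalue
      (Matrix.toEuclideanLin X : Module.End ℂ (EuclideanSpace ℂ (Fin (n+1))))
    obtain ⟨v, hv⟩ := hμ.exists_hasEigenvector
    have hv0 : v ≠ 0 := hv.right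
    set u : EuclideanSpace ℂ (Fin (n+1)) := ((‖v‖ : ℂ))⁻¹ • v with hu
    have hnu : ‖u‖ = 1 := by
      rw [hu, norm_smul]
      simp [norm_ne_zero_iff.mpr hv0, inv_mul_cancel₀]
    have hXu : X.mulVec u = μ • u := by
      have h1 : X.mulVec v = μ • v := by
        have := hv.apply_eq_smul
        simpa [Matrix.toEuclideanLin_apply] using congrArg WithLp.ofLp this
      rw [hu, WithLp.ofLp_smul, Matrix.mulVec_smul, h1, smul_comm]
    -- orthonormal basis with b 0 = u
    have hON : Orthonormal ℂ (Set.restrict {(0 : Fin (n+1))} (fun _ => u)) := by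
      constructor
      · intro i; exact hnu
      · intro i j hij
        exact absurd (Subtype.ext (by
          have := i.2; have := j.2
          simp only [Set.mem_singleton_iff] at *
          omega)) hij
    obtain ⟨b, hb⟩ := hON.exists_orthonormalBasis_extension_of_card_eq
      (by simp)
    have hb0 : b 0 = u := hb 0 rfl
    set U1 : Matrix (Fin (n+1)) (Fin (n+1)) ℂ :=
      (EuclideanSpace.basisFun (Fin (n+1)) ℂ).toBasis.toMatrix ⇑b with hU1def
    have hU1mem : U1 ∈ Matrix.unitaryGroup (Fin (n+1)) ℂ :=
      (EuclideanSpace.basisFun (Fin (n+1)) ℂ).toMatrix_orthonormalBasis_mem_unitary b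
    have hU1e : ∀ i j, U1 i j = b j i := by
      intro i j
      simp [hU1def, Module.Basis.toMatrix_apply]
    set M : Matrix (Fin (n+1)) (Fin (n+1)) ℂ := star U1 * X * U1 with hMdef
    have hM0 : ∀ i, M i 0 = if i = 0 then μ else 0 := by
      intro i
      have hcol : ∀ k, (X * U1) k 0 = μ * u k := by
        intro k
        have : (X * U1) k 0 = X.mulVec u k := by
          simp [Matrix.mul_apply, Matrix.mulVec, dotProduct, hU1e, hb0]
        rw [this, hXu]
        simp
      have key : M i 0 = μ * (inner ℂ (b i) (b 0) : ℂ) := by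
        rw [hMdef, Matrix.mul_assoc, Matrix.mul_apply]
        calc (∑ k, star U1 i k * (X * U1) k 0)
            = ∑ k, (starRingEnd ℂ) (b i k) * (μ * u k) := by
              apply Finset.sum_congr rfl; intro k _
              rw [hcol, Matrix.star_apply, hU1e]; rfl
          _ = μ * ∑ k, (starRingEnd ℂ) (b i k) * (u k) := by
              rw [Finset.mul_sum]; apply Finset.sum_congr rfl; intros; ring
          _ = μ * (inner ℂ (b i) (b 0) : ℂ) := by
              rw [hb0, PiLp.inner_apply]
              simp [RCLike.inner_apply, mul_comm]
      rw [key, orthonormal_iff_ite.mp b.orthonormal]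
      simp
    -- block decomposition
    set ee : Fin 1 ⊕ Fin n ≃ Fin (n+1) := finSumFinEquiv.trans (finCongr (Nat.add_comm 1 n))
      with heedef
    have he0 : ee (Sum.inl 0) = 0 := by
      apply Fin.ext; simp [heedef]
    have hes : ∀ j : Fin n, ee (Sum.inr j) = j.succ := by
      intro j; apply Fin.ext; simp [heedef, Nat.add_comm]
    set D : Matrix (Fin n) (Fin n) ℂ :=
      Matrix.of (fun i j => M (ee (Sum.inr i)) (ee (Sum.inr j))) with hDdef
    set B : Matrix (Fin 1) (Fin n) ℂ :=
      Matrix.of (fun i j => M (ee (Sum.inl i)) (ee (Sum.inr j))) with hBdef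
    set A1 : Matrix (Fin 1) (Fin 1) ℂ := Matrix.of (fun _ _ => μ) with hA1def
    have hblock : M = (Matrix.reindex ee ee) (Matrix.fromBlocks A1 B 0 D) := by
      have : (Matrix.reindex ee ee).symm M = Matrix.fromBlocks A1 B 0 D := by
        ext i j
        rcases i with i | i <;> rcases j with j | j <;>
          simp only [Matrix.reindex_symm, Matrix.reindex_apply, Matrix.submatrix_apply,
            Matrix.fromBlocks_apply₁₁, Matrix.fromBlocks_apply₁₂, Matrix.fromBlocks_apply₂₁,
            Matrix.fromBlocks_apply₂₂, Matrix.of_apply, Equiv.symm_symm]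
        · have hi : i = 0 := Subsingleton.elim _ _
          have hj : j = 0 := Subsingleton.elim _ _
          subst hi; subst hj
          rw [he0, hM0]; simp [hA1def]
        · rfl
        · have hj : j = 0 := Subsingleton.elim _ _
          subst hj
          rw [hes, he0, hM0]
          simp [Fin.succ_ne_zero]
        · rfl
      rw [← this, Equiv.apply_symm_apply]
    have hA1cp : A1.charpoly = Polynomial.X - Polynomial.C μ := by
      rw [Matrix.charpoly, Matrix.det_fin_one, Matrix.charmatrix_apply_eq]
      simp [hA1def]
    have hcpX : X.charpoly = A1.charpoly * D.charpoly := by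
      rw [← charpoly_conj_unitary X U1 hU1mem, ← hMdef, hblock, Matrix.charpoly_reindex,
        Matrix.charpoly_fromBlocks_zero₂₁]
    obtain ⟨U2, hU2mem, hroots2⟩ := ih D
    set F : Matrix (Fin 1 ⊕ Fin n) (Fin 1 ⊕ Fin n) ℂ := Matrix.fromBlocks 1 0 0 U2 with hFdef
    have hFmem : F ∈ Matrix.unitaryGroup (Fin 1 ⊕ Fin n) ℂ := by
      rw [Matrix.mem_unitaryGroup_iff']
      have h2 : star U2 * U2 = 1 := (Matrix.mem_unitaryGroup_iff').mp hU2mem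
      show Fᴴ * F = 1
      rw [hFdef, Matrix.fromBlocks_conjTranspose, Matrix.fromBlocks_multiply]
      simp [← Matrix.star_eq_conjTranspose, h2, Matrix.fromBlocks_one]
    set V : Matrix (Fin (n+1)) (Fin (n+1)) ℂ := (Matrix.reindex ee ee) F with hVdef
    have hreindex_mul : ∀ P Q : Matrix (Fin 1 ⊕ Fin n) (Fin 1 ⊕ Fin n) ℂ,
        (Matrix.reindex ee ee) P * (Matrix.reindex ee ee) Q =
          (Matrix.reindex ee ee) (P * Q) := by
      intro P Q
      simp [Matrix.reindex_apply, Matrix.submatrix_mul_equiv]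
    have hstarV : star V = (Matrix.reindex ee ee) (star F) := by
      show Vᴴ = _
      rw [hVdef, Matrix.reindex_apply, Matrix.conjTranspose_submatrix]
      rfl
    have hVmem : V ∈ Matrix.unitaryGroup (Fin (n+1)) ℂ := by
      rw [Matrix.mem_unitaryGroup_iff']
      rw [hstarV, hreindex_mul]
      have : star F * F = 1 := (Matrix.mem_unitaryGroup_iff').mp hFmem
      rw [this]
      simp [Matrix.reindex_apply, Matrix.submatrix_one_equiv]
    refine ⟨U1 * V, mul_mem hU1mem hVmem, ?_⟩
    have hG : star F * (Matrix.fromBlocks A1 B 0 D) * F =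
        Matrix.fromBlocks A1 (B * U2) 0 (star U2 * D * U2) := by
      rw [hFdef]
      show (Matrix.fromBlocks 1 0 0 U2)ᴴ * _ * _ = _
      rw [Matrix.fromBlocks_conjTranspose, Matrix.fromBlocks_multiply,
        Matrix.fromBlocks_multiply]
      congr 1 <;> simp [← Matrix.star_eq_conjTranspose, Matrix.mul_assoc]
    have hfinal : star (U1 * V) * X * (U1 * V) =
        (Matrix.reindex ee ee) (Matrix.fromBlocks A1 (B * U2) 0 (star U2 * D * U2)) := by
      have : star (U1 * V) * X * (U1 * V) = star V * M * V := by
        rw [hMdef, StarMul.star_mul]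
        noncomm_ring
      rw [this, hblock, hstarV, hreindex_mul, hreindex_mul, hG]
    rw [hfinal, hcpX]
    have hprodne : A1.charpoly * D.charpoly ≠ 0 := by
      rw [← hcpX]; exact X.charpoly_monic.ne_zero
    rw [Polynomial.roots_mul hprodne, hA1cp, Polynomial.roots_X_sub_C, hroots2]
    -- multiset bookkeeping
    have huniv : (Finset.univ.val : Multiset (Fin (n+1))) =
        Multiset.map ee (Finset.univ.val : Multiset (Fin 1 ⊕ Fin n)) := by
      have := Finset.map_univ_equiv ee
      rw [← this]
      rfl
    rw [huniv, Multiset.map_map]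
    have hdiag : ∀ s : Fin 1 ⊕ Fin n,
        ((fun i => ((Matrix.reindex ee ee)
            (Matrix.fromBlocks A1 (B * U2) 0 (star U2 * D * U2))) i i) ∘ ee) s =
          (Matrix.fromBlocks A1 (B * U2) 0 (star U2 * D * U2)) s s := by
      intro s
      simp [Matrix.reindex_apply]
    rw [Multiset.map_congr rfl (fun s _ => hdiag s)]
    have hsum : (Finset.univ.val : Multiset (Fin 1 ⊕ Fin n)) =
        Multiset.map Sum.inl (Finset.univ.val : Multiset (Fin 1)) +
          Multiset.map Sum.inr (Finset.univ.val : Multiset (Fin n)) := by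
      rw [← Finset.univ_disjSum_univ]
      rfl
    rw [hsum, Multiset.map_add, Multiset.map_map, Multiset.map_map]
    congr 1

-- roots of charpoly of a Hermitian matrix are the eigenvalues
lemma hermitian_roots {m : Type*} [Fintype m] [DecidableEq m]
    {H : Matrix m m ℂ} (hH : H.IsHermitian) :
    H.charpoly.roots =
      Multiset.map (fun i => ((hH.eigenvalues i : ℝ) : ℂ)) Finset.univ.val := by
  set V : Matrix m m ℂ := (hH.eigenvectorUnitary : Matrix m m ℂ) with hVdef
  have hVmem : V ∈ Matrix.unitaryGroup m ℂ := hH.eigenvectorUnitary.2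
  have h1 : star V * V = 1 := (Matrix.mem_unitaryGroup_iff').mp hVmem
  have h2 : V * star V = 1 := (Matrix.mem_unitaryGroup_iff).mp hVmem
  have hdiag : star V * H * V = Matrix.diagonal (fun i => ((hH.eigenvalues i : ℝ) : ℂ)) := by
    conv_lhs => rw [hH.spectral_theorem, Unitary.conjStarAlgAut_apply]
    rw [← hVdef]
    calc star V * (V * Matrix.diagonal (RCLike.ofReal ∘ hH.eigenvalues) * star V) * V
        = (star V * V) * Matrix.diagonal (RCLike.ofReal ∘ hH.eigenvalues) * (star V * V) := by
          noncomm_ring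
      _ = Matrix.diagonal (fun i => ((hH.eigenvalues i : ℝ) : ℂ)) := by
          rw [h1]; simp [Function.comp]
  have hcp := charpoly_conj_unitary H V hVmem
  rw [hdiag] at hcp
  rw [← hcp]
  have hcm : (Matrix.diagonal (fun i => ((hH.eigenvalues i : ℝ) : ℂ))).charpoly =
      ((Multiset.map (fun i => ((hH.eigenvalues i : ℝ) : ℂ)) Finset.univ.val).map
        (fun a => Polynomial.X - Polynomial.C a)).prod := by
    rw [Matrix.charpoly]
    have : charmatrix (Matrix.diagonal (fun i => ((hH.eigenvalues i : ℝ) : ℂ))) =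
        Matrix.diagonal (fun i => Polynomial.X - Polynomial.C ((hH.eigenvalues i : ℝ) : ℂ)) := by
      ext i j
      by_cases h : i = j
      · subst h; rw [Matrix.charmatrix_apply_eq]; simp
      · rw [Matrix.charmatrix_apply_ne _ _ _ h]; simp [Matrix.diagonal_apply_ne _ h]
    rw [this, Matrix.det_diagonal, Multiset.map_map]
    rfl
  rw [hcm, Polynomial.roots_multiset_prod_X_sub_C]

lemma unitary_col_normSq {m : Type*} [Fintype m] [DecidableEq m]
    {W : Matrix m m ℂ} (hW : W ∈ Matrix.unitaryGroup m ℂ) (i : m) :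
    ∑ j, Complex.normSq (W j i) = 1 := by
  have h1 : star W * W = 1 := (Matrix.mem_unitaryGroup_iff').mp hW
  have h2 : (star W * W) i i = 1 := by rw [h1]; simp
  rw [Matrix.mul_apply] at h2
  have h3 : ∀ j, (star W) i j * W j i = (Complex.normSq (W j i) : ℂ) := by
    intro j
    rw [Matrix.star_apply]
    exact Complex.normSq_eq_conj_mul_self.symm
  rw [Finset.sum_congr rfl (fun j _ => h3 j)] at h2
  rw [← Complex.ofReal_sum] at h2
  exact_mod_cast h2

lemma unitary_row_normSq {m : Type*} [Fintype m] [DecidableEq m]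
    {W : Matrix m m ℂ} (hW : W ∈ Matrix.unitaryGroup m ℂ) (j : m) :
    ∑ i, Complex.normSq (W j i) = 1 := by
  have h1 : W * star W = 1 := (Matrix.mem_unitaryGroup_iff).mp hW
  have h2 : (W * star W) j j = 1 := by rw [h1]; simp
  rw [Matrix.mul_apply] at h2
  have h3 : ∀ i, W j i * (star W) i j = (Complex.normSq (W j i) : ℂ) := by
    intro i
    rw [Matrix.star_apply]
    exact Complex.mul_conj _
  rw [Finset.sum_congr rfl (fun i _ => h3 i)] at h2
  rw [← Complex.ofReal_sum] at h2
  exact_mod_cast h2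

-- abstract majorization bound
lemma abstract_majorization {n k : ℕ} (hk1 : 1 ≤ k) (hkn : k ≤ n)
    (ν : Fin n → ℝ) (hν : Monotone ν) (c : Fin n → ℝ)
    (hc0 : ∀ j, 0 ≤ c j) (hc1 : ∀ j, c j ≤ 1)
    (hcs : ∑ j, c j = (k : ℝ)) :
    ∑ j, ν j * c j ≤
      ∑ j ∈ Finset.univ.filter (fun j : Fin n => n - k ≤ j.val), ν j := by
  have hnk : n - k < n := by omega
  set j0 : Fin n := ⟨n - k, hnk⟩ with hj0
  set F : Finset (Fin n) := Finset.univ.filter (fun j : Fin n => n - k ≤ j.val) with hF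
  have hcard : F.card = k := by
    have h1 : (Finset.univ.filter (fun j : Fin n => ¬ (n - k ≤ j.val))).card = n - k := by
      have : (Finset.univ.filter (fun j : Fin n => ¬ (n - k ≤ j.val))) = Finset.Iio j0 := by
        ext j
        simp [Fin.lt_def, hj0]
        omega
      rw [this, Fin.card_Iio]
    have h2 := Finset.card_filter_add_card_filter_not (s := Finset.univ)
      (p := fun j : Fin n => n - k ≤ j.val)
    simp only [Finset.card_univ, Fintype.card_fin] at h2
    rw [hF]
    omega
  set e : Fin n → ℝ := fun j => if j ∈ F then 1 else 0 with he
  have hes : ∑ j, e j = (k : ℝ) := by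
    rw [he]
    rw [Finset.sum_ite_mem]
    simp [Finset.univ_inter, hcard]
  have key : ∀ j, ν j * c j - ν j * e j ≤ ν j0 * (c j - e j) := by
    intro j
    by_cases hj : j ∈ F
    · have he1 : e j = 1 := by simp [he, hj]
      have hνj : ν j0 ≤ ν j := hν (by
        simp only [hF, Finset.mem_filter] at hj
        exact (Fin.le_def).mpr (by simpa [hj0] using hj.2))
      rw [he1]
      have : c j - 1 ≤ 0 := by linarith [hc1 j]
      nlinarith
    · have he0 : e j = 0 := by simp [he, hj]
      have hνj : ν j ≤ ν j0 := hν (by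
        simp only [hF, Finset.mem_filter, not_and, Finset.mem_univ, true_implies] at hj
        exact (Fin.le_def).mpr (by simp [hj0]; omega))
      rw [he0]
      have := hc0 j
      nlinarith
  have hsum : ∑ j, (ν j * c j - ν j * e j) ≤ ∑ j, ν j0 * (c j - e j) :=
    Finset.sum_le_sum (fun j _ => key j)
  have hrhs : ∑ j, ν j0 * (c j - e j) = 0 := by
    rw [← Finset.mul_sum, Finset.sum_sub_distrib, hcs, hes]
    ring
  have hFsum : ∑ j, ν j * e j = ∑ j ∈ F, ν j := by
    rw [he]
    simp only [mul_ite, mul_one, mul_zero]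
    rw [Finset.sum_ite_mem, Finset.univ_inter]
  have hlhs : ∑ j, (ν j * c j - ν j * e j) = (∑ j, ν j * c j) - ∑ j ∈ F, ν j := by
    rw [Finset.sum_sub_distrib, hFsum]
  rw [hlhs, hrhs] at hsum
  linarith

-- sum of dropped sorted prefix
lemma sum_drop_ofFn {n : ℕ} (f : Fin n → ℝ) (m : ℕ) :
    ((List.ofFn f).drop m).sum =
      ∑ j ∈ Finset.univ.filter (fun j : Fin n => m ≤ j.val), f j := by
  have h1 : ((List.ofFn f).take m).sum + ((List.ofFn f).drop m).sum = (List.ofFn f).sum :=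
    List.sum_take_add_sum_drop _ _
  have h2 : ((List.ofFn f).take m).sum =
      ∑ j ∈ Finset.univ.filter (fun j : Fin n => j.val < m), f j :=
    List.sum_take_ofFn f m
  have h3 : (List.ofFn f).sum = ∑ j, f j := by
    rw [List.sum_ofFn]
  have h4 : (∑ j ∈ Finset.univ.filter (fun j : Fin n => j.val < m), f j) +
      (∑ j ∈ Finset.univ.filter (fun j : Fin n => ¬ j.val < m), f j) = ∑ j, f j :=
    Finset.sum_filter_add_sum_filter_not _ _ _
  have h5 : Finset.univ.filter (fun j : Fin n => ¬ j.val < m) =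
      Finset.univ.filter (fun j : Fin n => m ≤ j.val) := by
    apply Finset.filter_congr
    intro j _
    simp [Nat.not_lt]
  rw [h5] at h4
  linarith

/-- The real parts of the eigenvalues of an `n×n` complex matrix `X`, sorted in
non-decreasing order (eigenvalues are the roots of the characteristic polynomial,
with multiplicity). -/
noncomputable def sortedReParts {n : ℕ} (X : Matrix (Fin n) (Fin n) ℂ) : List ℝ :=
  ((X.charpoly.roots).map Complex.re).sort (· ≤ ·)


/-- Ky Fan-type majorization: for every `1 ≤ k ≤ n`, the sum of the `k` largest real parts
of the eigenvalues of `X` is at most the sum of the `k` largest eigenvalues of the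
Hermitian part `Re X = (X + Xᴴ)/2` (whose eigenvalues are real, hence recovered as the
real parts of its characteristic roots); moreover the total sums agree. -/
theorem kyFan_majorization_reParts
    (n : ℕ) (X : Matrix (Fin n) (Fin n) ℂ) :
    (∀ k : ℕ, 1 ≤ k → k ≤ n →
      ((sortedReParts X).drop (n - k)).sum ≤
        ((sortedReParts ((1 / 2 : ℂ) • (X + Xᴴ))).drop (n - k)).sum) ∧
    ((sortedReParts X).sum = (sortedReParts ((1 / 2 : ℂ) • (X + Xᴴ))).sum ∧
      (sortedReParts X).sum = (Matrix.trace X).re) := by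
  set H : Matrix (Fin n) (Fin n) ℂ := (1 / 2 : ℂ) • (X + Xᴴ) with hHdef
  have hH : H.IsHermitian := by
    show Hᴴ = H
    rw [hHdef, Matrix.conjTranspose_smul, Matrix.conjTranspose_add,
      Matrix.conjTranspose_conjTranspose]
    congr 1
    · norm_num
    · rw [add_comm]
  set μ : Fin n → ℝ := hH.eigenvalues with hμdef
  set σ : Equiv.Perm (Fin n) := Tuple.sort μ with hσdef
  set ν : Fin n → ℝ := μ ∘ σ with hνdef
  have hν : Monotone ν := Tuple.monotone_sort μ
  -- sortedReParts H is the sorted list of eigenvalues of H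
  have hRH : (H.charpoly.roots).map Complex.re = Multiset.map μ Finset.univ.val := by
    rw [hermitian_roots hH, Multiset.map_map]
    simp
    exact List.Perm.refl _
  have hmultH : Multiset.map μ Finset.univ.val = ↑(List.ofFn ν) := by
    rw [← Fin.univ_val_map (f := ν), hνdef]
    have : Multiset.map (μ ∘ σ) Finset.univ.val =
        Multiset.map μ (Multiset.map σ Finset.univ.val) := by
      rw [Multiset.map_map]
    rw [this]
    congr 1
    have := Finset.map_univ_equiv σ
    calc (Finset.univ.val : Multiset (Fin n)) =
        (Finset.univ.map σ.toEmbedding).val := by rw [Finset.map_univ_equiv]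
      _ = Multiset.map σ Finset.univ.val := rfl
  have hsortH : sortedReParts H = List.ofFn ν := by
    rw [sortedReParts, hRH]
    have hperm : (Multiset.sort (Multiset.map μ Finset.univ.val) (· ≤ ·)).Perm (List.ofFn ν) := by
      apply Multiset.coe_eq_coe.mp
      rw [Multiset.sort_eq, hmultH]
    exact List.Perm.eq_of_sortedLE (List.sortedLE_iff_pairwise.mpr (Multiset.pairwise_sort _ _)) hν.sortedLE_ofFn hperm
  -- part 2
  have htrace : (sortedReParts X).sum = (Matrix.trace X).re := by
    rw [sortedReParts]
    have h1 : ((X.charpoly.roots.map Complex.re).sort (· ≤ ·)).sum =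
        (X.charpoly.roots.map Complex.re).sum := by
      conv_rhs => rw [← Multiset.sort_eq (X.charpoly.roots.map Complex.re) (· ≤ ·)]
      rw [Multiset.sum_coe]
    rw [h1]
    have h2 : (X.charpoly.roots.map Complex.re).sum = (X.charpoly.roots.sum).re :=
      (map_multiset_sum Complex.reAddGroupHom X.charpoly.roots).symm
    rw [h2, ← Matrix.trace_eq_sum_roots_charpoly]
  have htraceH : (sortedReParts H).sum = (Matrix.trace X).re := by
    rw [sortedReParts]
    have h1 : ((H.charpoly.roots.map Complex.re).sort (· ≤ ·)).sum =
        (H.charpoly.roots.map Complex.re).sum := by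
      conv_rhs => rw [← Multiset.sort_eq (H.charpoly.roots.map Complex.re) (· ≤ ·)]
      rw [Multiset.sum_coe]
    rw [h1]
    have h2 : (H.charpoly.roots.map Complex.re).sum = (H.charpoly.roots.sum).re :=
      (map_multiset_sum Complex.reAddGroupHom H.charpoly.roots).symm
    rw [h2, ← Matrix.trace_eq_sum_roots_charpoly]
    rw [hHdef, Matrix.trace_smul, Matrix.trace_add, Matrix.trace_conjTranspose]
    have h4 : Matrix.trace X + star (Matrix.trace X) = ((2 * (Matrix.trace X).re : ℝ) : ℂ) := by
      rw [← Complex.add_conj]; rfl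
    rw [h4, smul_eq_mul]
    have h3 : (1/2 : ℂ) * ((2 * (Matrix.trace X).re : ℝ) : ℂ) =
        (((Matrix.trace X).re : ℝ) : ℂ) := by
      push_cast; ring
    rw [h3, Complex.ofReal_re]
  refine ⟨?_, htrace.trans htraceH.symm, htrace⟩
  -- part 1
  intro k hk1 hkn
  obtain ⟨U, hUmem, hroots⟩ := exists_unitary_diag n X
  set N : Matrix (Fin n) (Fin n) ℂ := star U * X * U with hNdef
  set P : Matrix (Fin n) (Fin n) ℂ := star U * H * U with hPdef
  set d : Fin n → ℝ := fun i => (P i i).re with hddef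
  -- the real parts of the diagonal of N are the diagonal of P
  have hstarN : star N = star U * Xᴴ * U := by
    rw [hNdef, StarMul.star_mul, StarMul.star_mul, star_star]
    rw [Matrix.mul_assoc]
    rfl
  have hPN : P = (1 / 2 : ℂ) • (N + star N) := by
    rw [hPdef, hHdef, hstarN, hNdef]
    rw [Matrix.mul_smul, Matrix.smul_mul]
    congr 1
    rw [Matrix.mul_add, Matrix.add_mul]
  have hdre : ∀ i, (N i i).re = d i := by
    intro i
    rw [hddef]
    rw [hPN]
    simp only [Matrix.smul_apply, Matrix.add_apply, Matrix.star_apply]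
    have : star (N i i) = (starRingEnd ℂ) (N i i) := rfl
    rw [this]
    rw [Complex.add_conj]
    simp
  have hR : (X.charpoly.roots).map Complex.re = Multiset.map d Finset.univ.val := by
    rw [hroots, Multiset.map_map]
    apply Multiset.map_congr rfl
    intro i _
    exact hdre i
  -- extract the top-k index set S
  set t : List ℝ := (sortedReParts X).drop (n - k) with htdef
  have htle : (↑t : Multiset ℝ) ≤ Multiset.map d Finset.univ.val := by
    rw [← hR]
    have h1 : List.Sublist t (sortedReParts X) := List.drop_sublist _ _
    have h2 : (↑t : Multiset ℝ) ≤ ↑(sortedReParts X) := Multiset.coe_le.mpr h1.subperm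
    rw [sortedReParts, Multiset.sort_eq] at h2
    exact h2
  obtain ⟨s', hs'le, hs'eq⟩ := multiset_exists_of_le_map htle
  set S : Finset (Fin n) := ⟨s', Multiset.nodup_of_le hs'le Finset.univ.nodup⟩ with hSdef
  have hlen : t.length = k := by
    rw [htdef, List.length_drop, sortedReParts, Multiset.length_sort, hR,
      Multiset.card_map]
    simp only [Finset.card_val, Finset.card_univ, Fintype.card_fin]
    omega
  have hcardS : S.card = k := by
    have : Multiset.card (↑t : Multiset ℝ) = Multiset.card (s'.map d) := by rw [hs'eq]
    rw [Multiset.coe_card, Multiset.card_map, hlen] at this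
    exact this.symm
  have htsum : t.sum = ∑ i ∈ S, d i := by
    have h1 : (↑t : Multiset ℝ).sum = (s'.map d).sum := by rw [hs'eq]
    rw [Multiset.sum_coe] at h1
    exact h1
  -- Schur-Horn
  set V : Matrix (Fin n) (Fin n) ℂ := (hH.eigenvectorUnitary : Matrix (Fin n) (Fin n) ℂ)
    with hVdef
  have hVmem : V ∈ Matrix.unitaryGroup (Fin n) ℂ := hH.eigenvectorUnitary.2
  set W : Matrix (Fin n) (Fin n) ℂ := star V * U with hWdef
  have hWmem : W ∈ Matrix.unitaryGroup (Fin n) ℂ :=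
    mul_mem (Unitary.star_mem hVmem) hUmem
  have hstarW : star W = star U * V := by
    rw [hWdef, StarMul.star_mul, star_star]
  have hPW : P = star W * Matrix.diagonal (fun j => ((μ j : ℝ) : ℂ)) * W := by
    rw [hPdef, hstarW, hWdef]
    conv_lhs => rw [hH.spectral_theorem, Unitary.conjStarAlgAut_apply]
    rw [← hVdef, ← hμdef]
    have : Matrix.diagonal (RCLike.ofReal ∘ μ) =
        Matrix.diagonal (fun j => ((μ j : ℝ) : ℂ)) := rfl
    rw [this]
    noncomm_ring
  have hd_eq : ∀ i, d i = ∑ j, μ j * Complex.normSq (W j i) := by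
    intro i
    have h1 : P i i = ((∑ j, μ j * Complex.normSq (W j i) : ℝ) : ℂ) := by
      rw [hPW, Matrix.mul_assoc, Matrix.mul_apply]
      rw [Complex.ofReal_sum]
      apply Finset.sum_congr rfl
      intro j _
      rw [Matrix.diagonal_mul, Matrix.star_apply, Complex.ofReal_mul]
      have hsw : star (W j i) * W j i = ((Complex.normSq (W j i) : ℝ) : ℂ) :=
        Complex.normSq_eq_conj_mul_self.symm
      calc star (W j i) * (((μ j : ℝ) : ℂ) * W j i)
          = ((μ j : ℝ) : ℂ) * (star (W j i) * W j i) := by ring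
        _ = ((μ j : ℝ) : ℂ) * ((Complex.normSq (W j i) : ℝ) : ℂ) := by rw [hsw]
    have hdi : d i = (P i i).re := rfl
    rw [hdi, h1, Complex.ofReal_re]
  set c : Fin n → ℝ := fun j => ∑ i ∈ S, Complex.normSq (W j i) with hcdef
  have hc0 : ∀ j, 0 ≤ c j := fun j =>
    Finset.sum_nonneg (fun i _ => Complex.normSq_nonneg _)
  have hc1 : ∀ j, c j ≤ 1 := by
    intro j
    show ∑ i ∈ S, Complex.normSq (W j i) ≤ 1
    calc ∑ i ∈ S, Complex.normSq (W j i) ≤ ∑ i, Complex.normSq (W j i) :=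
        Finset.sum_le_sum_of_subset_of_nonneg (Finset.subset_univ S)
          (fun i _ _ => Complex.normSq_nonneg _)
      _ = 1 := unitary_row_normSq hWmem j
  have hcsum : ∑ j, c j = (k : ℝ) := by
    show ∑ j, ∑ i ∈ S, Complex.normSq (W j i) = (k : ℝ)
    rw [Finset.sum_comm]
    have : ∀ i ∈ S, ∑ j, Complex.normSq (W j i) = 1 := fun i _ => unitary_col_normSq hWmem i
    rw [Finset.sum_congr rfl this]
    simp [hcardS]
  have hSd : ∑ i ∈ S, d i = ∑ j, μ j * c j := by
    rw [Finset.sum_congr rfl (fun i _ => hd_eq i), Finset.sum_comm]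
    apply Finset.sum_congr rfl
    intro j _
    show ∑ i ∈ S, μ j * Complex.normSq (W j i) = μ j * ∑ i ∈ S, Complex.normSq (W j i)
    rw [Finset.mul_sum]
  have hreindex : ∑ j, μ j * c j = ∑ j, ν j * c (σ j) := by
    rw [← Equiv.sum_comp σ (fun j => μ j * c j)]
    rfl
  have hmaj := abstract_majorization hk1 hkn ν hν (fun j => c (σ j))
    (fun j => hc0 (σ j)) (fun j => hc1 (σ j))
    (by rw [Equiv.sum_comp σ c, hcsum])
  have hRHS : ((sortedReParts H).drop (n - k)).sum =
      ∑ j ∈ Finset.univ.filter (fun j : Fin n => n - k ≤ j.val), ν j := by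
    rw [hsortH, sum_drop_ofFn]
  show t.sum ≤ ((sortedReParts H).drop (n - k)).sum
  rw [htsum, hRHS, hSd, hreindex]
  exact hmaj
end

section
/- Let N ≥ 2 and, for i, j ∈ {0,…,N−1}, let d(i→j) := (j − i) mod N be the directed shortest-path distance in the directed N-cycle. Then the network directionality index of the directed N-cycle equals (N−2)/(N−1) if N is even and (N−1)/N if N is odd; in particular, NDI < 1 for every directed cycle, so the network directionality index of a directed cycle is normalized below 1. -/
open Finset

/-- The network directionality index of the directed `N`-cycle (with directed
shortest-path distance `d(i→j) = (j − i) mod N`) equals `(N−2)/(N−1)` for even `N`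
and `(N−1)/N` for odd `N`; in particular it is always strictly below `1`. -/
theorem ndi_directed_cycle_value
    (N : ℕ) (hN : 2 ≤ N)
    (d : Fin N → Fin N → ℕ) (hd : ∀ i j, d i j = (j.val + N - i.val) % N)
    (NDI : ℝ)
    (hNDI : NDI =
      (∑ i : Fin N, ∑ j ∈ Finset.univ.filter (fun j => i < j),
          |(d i j : ℝ) - (d j i : ℝ)|) /
        (∑ i : Fin N, ∑ j ∈ Finset.univ.filter (fun j => i < j),
          ((d i j : ℝ) + (d j i : ℝ)) / 2)) :
    (Even N → NDI = ((N : ℝ) - 2) / ((N : ℝ) - 1)) ∧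
    (Odd N → NDI = ((N : ℝ) - 1) / (N : ℝ)) ∧
    NDI < 1 := by
  haveI : NeZero N := ⟨by omega⟩
  set m : ℕ := N / 2 with hm
  have hmN : m + 1 ≤ N := by omega
  have hNR : (2:ℝ) ≤ (N:ℝ) := by exact_mod_cast hN
  -- d in terms of Fin subtraction
  have hdd : ∀ i j : Fin N, d i j = (j - i : Fin N).val := by
    intro i j
    rw [hd, Fin.sub_def]
    congr 1
    have := i.isLt
    omega
  have hd_self : ∀ i : Fin N, d i i = 0 := by
    intro i
    rw [hd]
    have h1 : i.val + N - i.val = N := by omega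
    rw [h1, Nat.mod_self]
  have hlt : ∀ i j : Fin N, d i j < N := by
    intro i j; rw [hdd]; exact (j - i).isLt
  have hne : ∀ i j : Fin N, i ≠ j → d i j ≠ 0 := by
    intro i j hij h0
    rw [hdd] at h0
    have : (j - i : Fin N) = 0 := Fin.ext h0
    exact hij (by have := sub_eq_zero.mp this; exact this.symm)
  have hcompl : ∀ i j : Fin N, i ≠ j → d j i = N - d i j := by
    intro i j hij
    rw [hdd j i, hdd i j]
    have h1 : (i - j : Fin N) = -(j - i) := by rw [neg_sub]
    rw [h1, Fin.neg_def]
    simp only []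
    have h2 : (j - i : Fin N).val ≠ 0 := by rw [← hdd]; exact hne i j hij
    have h3 : (j - i : Fin N).val < N := (j - i).isLt
    exact Nat.mod_eq_of_lt (by omega)
  -- pointwise values
  set g : ℕ → ℝ := fun k => if k = 0 then 0 else |2*(k:ℝ) - N| with hg
  set hh : ℕ → ℝ := fun k => if k = 0 then 0 else (N:ℝ)/2 with hhh
  have hG : ∀ i j : Fin N, |(d i j : ℝ) - (d j i : ℝ)| = g (d i j) := by
    intro i j
    by_cases hij : i = j
    · subst hij; simp [hg, hd_self i]
    · have h1 := hne i j hij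
      have h2 := hlt i j
      have h3 := hcompl i j hij
      rw [h3]
      simp only [hg, if_neg h1]
      rw [Nat.cast_sub h2.le]
      congr 1
      ring
  have hH : ∀ i j : Fin N, ((d i j : ℝ) + (d j i : ℝ))/2 = hh (d i j) := by
    intro i j
    by_cases hij : i = j
    · subst hij; simp [hhh, hd_self i]
    · have h1 := hne i j hij
      have h2 := hlt i j
      have h3 := hcompl i j hij
      rw [h3]
      simp only [hhh, if_neg h1]
      rw [Nat.cast_sub h2.le]
      ring
  -- row sums
  have hrow : ∀ (f : ℕ → ℝ) (i : Fin N), ∑ j : Fin N, f (d i j) = ∑ k ∈ range N, f k := by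
    intro f i
    calc ∑ j : Fin N, f (d i j) = ∑ j : Fin N, f ((j - i : Fin N).val) := by
          exact Finset.sum_congr rfl fun j _ => by rw [hdd]
      _ = ∑ j : Fin N, f (j.val) := by
          exact Fintype.sum_equiv (Equiv.subRight i) _ _ (fun j => rfl)
      _ = ∑ k ∈ range N, f k := Fin.sum_univ_eq_sum_range _ _
  -- symmetrization
  have sym : ∀ F : Fin N → Fin N → ℝ, (∀ i j, F i j = F j i) → (∀ i, F i i = 0) →
      ∑ i : Fin N, ∑ j ∈ Finset.univ.filter (fun j => i < j), F i j
        = (∑ i : Fin N, ∑ j : Fin N, F i j) / 2 := by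
    intro F hsymm hdiag
    have h1 : ∀ i : Fin N, ∑ j : Fin N, F i j
        = (∑ j ∈ Finset.univ.filter (fun j => i < j), F i j)
          + ∑ j ∈ Finset.univ.filter (fun j => j < i), F i j := by
      intro i
      rw [← Finset.sum_filter_add_sum_filter_not univ (fun j => i < j) (F i)]
      congr 1
      have hset : (univ.filter fun j => ¬ i < j) = insert i (univ.filter fun j => j < i) := by
        ext j
        simp only [mem_filter, mem_univ, true_and, mem_insert, not_lt]
        constructor
        · intro hle
          rcases lt_or_eq_of_le hle with h | h
          · exact Or.inr h
          · exact Or.inl h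
        · rintro (rfl | h)
          · exact le_refl _
          · exact h.le
      rw [hset, Finset.sum_insert (by simp), hdiag, zero_add]
    have h2 : ∑ i : Fin N, ∑ j ∈ Finset.univ.filter (fun j => j < i), F i j
        = ∑ i : Fin N, ∑ j ∈ Finset.univ.filter (fun j => i < j), F i j := by
      rw [Finset.sum_comm' (s' := fun j => Finset.univ.filter (fun i => j < i)) (t' := univ)
        (by intro i j; simp only [mem_filter, mem_univ, true_and, and_true])]
      exact Finset.sum_congr rfl fun j _ => Finset.sum_congr rfl fun i _ => hsymm j i ▸ rfl
    have h3 : ∑ i : Fin N, ∑ j : Fin N, F i j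
        = 2 * ∑ i : Fin N, ∑ j ∈ Finset.univ.filter (fun j => i < j), F i j := by
      rw [Finset.sum_congr rfl fun i _ => h1 i, Finset.sum_add_distrib, h2]; ring
    rw [h3]; ring
  -- Gauss sum helper
  have gauss : ∀ n : ℕ, ∑ k ∈ range n, (k:ℝ) = n*(n-1)/2 := by
    intro n
    induction n with
    | zero => simp
    | succ n ih => rw [Finset.sum_range_succ, ih]; push_cast; ring
  have gaussIco : ∀ a b : ℕ, a ≤ b → ∑ k ∈ Ico a b, (k:ℝ) = (b*(b-1) - a*(a-1))/2 := by
    intro a b hab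
    rw [Finset.sum_Ico_eq_sub _ hab, gauss, gauss]; ring
  -- sum of g
  have hB : ∑ k ∈ range N, g k = 2*(m:ℝ)*((N:ℝ)-(m:ℝ)-1) := by
    rw [Finset.range_eq_Ico, ← Finset.sum_Ico_consecutive g (Nat.zero_le 1) (by omega)]
    have e0 : ∑ k ∈ Ico 0 1, g k = 0 := by simp [hg]
    rw [e0, zero_add, ← Finset.sum_Ico_consecutive g (by omega : 1 ≤ m+1) (by omega : m+1 ≤ N)]
    have e1 : ∑ k ∈ Ico 1 (m+1), g k = ∑ k ∈ Ico 1 (m+1), ((N:ℝ) - 2*k) := by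
      refine Finset.sum_congr rfl fun k hk => ?_
      simp only [Finset.mem_Ico] at hk
      have hk0 : k ≠ 0 := by omega
      have hk2 : 2*k ≤ N := by omega
      simp only [hg, if_neg hk0]
      rw [abs_of_nonpos (by
        have := (Nat.cast_le (α := ℝ)).mpr hk2; push_cast at this; linarith)]
      ring
    have e2 : ∑ k ∈ Ico (m+1) N, g k = ∑ k ∈ Ico (m+1) N, (2*(k:ℝ) - N) := by
      refine Finset.sum_congr rfl fun k hk => ?_
      simp only [Finset.mem_Ico] at hk
      have hk0 : k ≠ 0 := by omega
      have hk2 : N ≤ 2*k := by omega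
      simp only [hg, if_neg hk0]
      rw [abs_of_nonneg (by
        have := (Nat.cast_le (α := ℝ)).mpr hk2; push_cast at this; linarith)]
    rw [e1, e2, Finset.sum_sub_distrib, Finset.sum_sub_distrib, Finset.sum_const,
      Finset.sum_const, Nat.card_Ico, Nat.card_Ico, ← Finset.mul_sum, ← Finset.mul_sum,
      gaussIco 1 (m+1) (by omega), gaussIco (m+1) N (by omega), nsmul_eq_mul, nsmul_eq_mul]
    simp only [Nat.add_sub_cancel]
    rw [Nat.cast_sub hmN]
    push_cast
    ring
  -- sum of hh
  have hC : ∑ k ∈ range N, hh k = ((N:ℝ)-1) * ((N:ℝ)/2) := by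
    rw [Finset.range_eq_Ico, ← Finset.sum_Ico_consecutive hh (Nat.zero_le 1) (by omega)]
    have e0 : ∑ k ∈ Ico 0 1, hh k = 0 := by simp [hhh]
    have e1 : ∑ k ∈ Ico 1 N, hh k = ∑ k ∈ Ico 1 N, ((N:ℝ)/2) := by
      refine Finset.sum_congr rfl fun k hk => ?_
      simp only [Finset.mem_Ico] at hk
      simp only [hhh]; rw [if_neg (by omega : ¬ k = 0)]
    rw [e0, zero_add, e1, Finset.sum_const, Nat.card_Ico, nsmul_eq_mul,
      Nat.cast_sub (by omega : 1 ≤ N)]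
    push_cast
    ring
  -- numerator and denominator
  have hNum : (∑ i : Fin N, ∑ j ∈ Finset.univ.filter (fun j => i < j),
      |(d i j : ℝ) - (d j i : ℝ)|) = (N:ℝ) * (2*(m:ℝ)*((N:ℝ)-(m:ℝ)-1)) / 2 := by
    rw [sym _ (fun i j => abs_sub_comm _ _) (fun i => by simp)]
    have : ∑ i : Fin N, ∑ j : Fin N, |(d i j : ℝ) - (d j i : ℝ)|
        = ∑ i : Fin N, ∑ k ∈ range N, g k := by
      refine Finset.sum_congr rfl fun i _ => ?_
      rw [← hrow g i]
      exact Finset.sum_congr rfl fun j _ => hG i j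
    rw [this, Finset.sum_const, Finset.card_univ, Fintype.card_fin, hB, nsmul_eq_mul]
  have hDen : (∑ i : Fin N, ∑ j ∈ Finset.univ.filter (fun j => i < j),
      ((d i j : ℝ) + (d j i : ℝ)) / 2) = (N:ℝ) * (((N:ℝ)-1) * ((N:ℝ)/2)) / 2 := by
    rw [sym _ (fun i j => by ring) (fun i => by simp [hd_self i])]
    have : ∑ i : Fin N, ∑ j : Fin N, ((d i j : ℝ) + (d j i : ℝ))/2
        = ∑ i : Fin N, ∑ k ∈ range N, hh k := by
      refine Finset.sum_congr rfl fun i _ => ?_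
      rw [← hrow hh i]
      exact Finset.sum_congr rfl fun j _ => hH i j
    rw [this, Finset.sum_const, Finset.card_univ, Fintype.card_fin, hC, nsmul_eq_mul]
  rw [hNum, hDen] at hNDI
  have hN0 : (N:ℝ) ≠ 0 := by linarith
  have hN1 : (N:ℝ) - 1 ≠ 0 := by linarith
  have hDpos : (N:ℝ) * (((N:ℝ)-1) * ((N:ℝ)/2)) / 2 ≠ 0 := by positivity
  -- parity cases
  have heven : Even N → NDI = ((N : ℝ) - 2) / ((N : ℝ) - 1) := by
    intro he
    have h2m : 2 * m = N := by rcases Nat.even_iff.mp he with h; omega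
    have hmR : (m:ℝ) = (N:ℝ)/2 := by
      have : ((2*m : ℕ) : ℝ) = (N:ℝ) := by rw [h2m]
      push_cast at this; linarith
    rw [hNDI, hmR, div_eq_div_iff (by positivity) hN1]
    ring
  have hodd : Odd N → NDI = ((N : ℝ) - 1) / (N : ℝ) := by
    intro ho
    have h2m : 2 * m + 1 = N := by rcases Nat.odd_iff.mp ho with h; omega
    have hmR : (m:ℝ) = ((N:ℝ)-1)/2 := by
      have : ((2*m+1 : ℕ) : ℝ) = (N:ℝ) := by rw [h2m]
      push_cast at this; linarith
    rw [hNDI, hmR, div_eq_div_iff (by positivity) hN0]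
    ring
  refine ⟨heven, hodd, ?_⟩
  rcases Nat.even_or_odd N with he | ho
  · rw [heven he, div_lt_one (by linarith)]; linarith
  · rw [hodd ho, div_lt_one (by linarith)]; linarith
end
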